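/- arXiv:2107.13123 — 3 statements merged into one kernel-verified Lean document; each statement's English description precedes it below -/
import Mathlib

section
/- Let W be an n-letter square-free word and let 𝒜 be a set of square-completing quadruples (a, ℓ, b, c) in W such that no two elements of 𝒜 share the same pair (b, c). For an integer ℓ ≥ 2, let 𝒜_ℓ denote the set of quadruples in 𝒜 whose length parameter equals ℓ. Then for any integer L ≥ 300, the sum over ℓ with L ≤ ℓ ≤ 2L − 1 of |𝒜_ℓ| is at most 320n / L. -/
/-- A word is square-free if it contains no factor of the form `X ++ X` with `X` nonempty. -/
def SquareFree {α : Type*} (W : List α) : Prop :=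
  ∀ X : List α, X ≠ [] → ¬ (X ++ X) <:+: W

/-- `W'` is an extension of `W` if it is obtained by inserting a single letter into `W`. -/
def IsExtension {α : Type*} (W W' : List α) : Prop :=
  ∃ (W₁ W₂ : List α) (x : α), W = W₁ ++ W₂ ∧ W' = W₁ ++ [x] ++ W₂

/-- A square-free word is extremal square-free if none of its extensions is square-free. -/
def ExtremalSquareFree {α : Type*} (W : List α) : Prop :=
  SquareFree W ∧ ∀ W', IsExtension W W' → ¬ SquareFree W'
/-- The factor `W[a, b)` of `W`, consisting of the letters `a, a+1, …, b-1`
(letters are numbered from 1). -/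
def factor {α : Type*} (W : List α) (a b : ℕ) : List α :=
  (W.drop (a - 1)).take (b - a)

/-- The quadruple `(a, ℓ, b, c)` is square-completing in `W` if, in the word `W +_b c`
obtained by inserting the letter `c` at gap `b` of `W`, the factors `[a, a+ℓ)` and
`[a+ℓ, a+2ℓ)` are equal (so they form a square of length `2ℓ`). -/
def SquareCompleting {α : Type*} (W : List α) (a ℓ b : ℕ) (c : α) : Prop :=
  1 ≤ a ∧ 1 ≤ ℓ ∧ a ≤ b + 1 ∧ b ≤ W.length ∧ a + 2 * ℓ ≤ W.length + 2 ∧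
    factor (W.insertIdx b c) a (a + ℓ) = factor (W.insertIdx b c) (a + ℓ) (a + 2 * ℓ)

/-- The sign of a square-completing quadruple: `1` if `b ≤ a + ℓ - 2`
(the inserted letter lies in the first half of the square), and `-1` if `b ≥ a + ℓ - 1`. -/
def scSign (a ℓ b : ℕ) : ℤ :=
  if b + 2 ≤ a + ℓ then 1 else -1


namespace SCDR


variable {α : Type*}

/-- 1-based indexing of a list, as an `Option`-valued function on `ℤ`. -/
def uof (W : List α) : ℤ → Option α := fun i => if 0 < i then W[(i-1).toNat]? else none

def Supp (v : ℤ → Option α) (n : ℤ) : Prop := ∀ i, v i ≠ none ↔ 1 ≤ i ∧ i ≤ n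

def NoSq (v : ℤ → Option α) : Prop :=
  ∀ x p : ℤ, 1 ≤ p → (∀ i, x ≤ i → i < x + p → v i = v (i + p)) →
    v x ≠ none → v (x + 2*p - 1) ≠ none → False

lemma supp_uof (W : List α) : Supp (uof W) W.length := by
  intro i
  unfold uof
  constructor
  · intro h
    by_cases hi : 0 < i
    · simp only [if_pos hi] at h
      rw [ne_eq, List.getElem?_eq_none_iff, not_le] at h
      constructor
      · omega
      · omega
    · simp [if_neg hi] at h
  · rintro ⟨h1, h2⟩
    have hi : 0 < i := by omega
    simp only [if_pos hi]
    rw [ne_eq, List.getElem?_eq_none_iff, not_le]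
    omega

lemma nosq_uof (W : List α) (hW : SquareFree W) : NoSq (uof W) := by
  intro x p hp hrel hx hend
  have hsupp := supp_uof W
  have hx' := (hsupp x).mp hx
  have hend' := (hsupp _).mp hend
  set n := W.length with hn
  -- 0-based start and period
  set i₀ : ℕ := (x - 1).toNat with hi₀
  set p₀ : ℕ := p.toNat with hp₀
  have hi₀x : (i₀ : ℤ) = x - 1 := Int.toNat_of_nonneg (by omega)
  have hp₀p : (p₀ : ℤ) = p := Int.toNat_of_nonneg (by omega)
  have hran : i₀ + 2 * p₀ ≤ n := by
    have : (i₀ : ℤ) + 2 * (p₀ : ℤ) ≤ (n : ℤ) := by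
      rw [hi₀x, hp₀p]; omega
    exact_mod_cast this
  have hp₀pos : 0 < p₀ := by omega
  -- pointwise equality of the two halves
  have hpoint : ∀ k : ℕ, k < p₀ → W[i₀ + k]? = W[i₀ + p₀ + k]? := by
    intro k hk
    have h1 := hrel (x + k) (by omega) (by push_cast; omega)
    unfold uof at h1
    rw [if_pos (by omega : (0:ℤ) < x + k), if_pos (by omega : (0:ℤ) < x + k + p)] at h1
    have e1 : (x + k - 1).toNat = i₀ + k := by omega
    have e2 : (x + k + p - 1).toNat = i₀ + p₀ + k := by omega
    rwa [e1, e2] at h1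
  set X : List α := (W.drop i₀).take p₀ with hX
  have hXlen : X.length = p₀ := by
    rw [hX, List.length_take, List.length_drop]
    omega
  have hXne : X ≠ [] := by
    intro h
    rw [h] at hXlen
    simp at hXlen
    omega
  have hXeq : X = (W.drop (i₀ + p₀)).take p₀ := by
    apply List.ext_getElem?
    intro k
    rw [hX]
    rw [List.getElem?_take, List.getElem?_take]
    by_cases hk : k < p₀
    · rw [if_pos hk, if_pos hk, List.getElem?_drop, List.getElem?_drop]
      exact hpoint k hk
    · rw [if_neg hk, if_neg hk]
  have hinfix : X ++ X <:+: W := by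
    have h1 : X ++ X = (W.drop i₀).take (p₀ + p₀) := by
      rw [List.take_add]
      congr 1
      rw [hXeq, List.drop_drop]
    rw [h1]
    exact ((W.drop i₀).take_prefix _).isInfix.trans (W.drop_suffix i₀).isInfix
  exact hW X hXne hinfix

def vrev (v : ℤ → Option α) (n : ℤ) : ℤ → Option α := fun i => v (n + 1 - i)

lemma supp_vrev {v : ℤ → Option α} {n : ℤ} (h : Supp v n) : Supp (vrev v n) n := by
  intro i
  unfold vrev
  rw [h (n + 1 - i)]
  omega

lemma nosq_vrev {v : ℤ → Option α} {n : ℤ} (h : NoSq v) : NoSq (vrev v n) := by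
  intro x p hp hrel hx hend
  unfold vrev at hrel hx hend
  apply h (n + 2 - x - 2*p) p hp
  · intro i h1 h2
    have := hrel (n + 1 - i - p) (by omega) (by omega)
    rw [show n + 1 - (n + 1 - i - p) = i + p by ring, show n + 1 - (n + 1 - i - p + p) = i by ring] at this
    exact this.symm
  · rwa [show n + 2 - x - 2*p = n + 1 - (x + 2*p - 1) by ring]
  · rwa [show n + 2 - x - 2*p + 2*p - 1 = n + 1 - x by ring]


structure Pat (v : ℤ → Option α) (n g l lam rho : ℤ) : Prop where
  hl : 2 ≤ l
  hlam : 0 ≤ lam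
  hrho : 1 ≤ rho
  hsum : lam + rho = l - 1
  hg : lam ≤ g
  hn : g + l + rho ≤ n
  right : ∀ x : ℤ, 1 ≤ x → x ≤ rho → v (g + x) = v (g + l + x)
  left : ∀ x : ℤ, 1 ≤ x → x ≤ lam → v (g + 1 - x) = v (g + l - x)
variable {v : ℤ → Option α} {n : ℤ}

/-- shift-1 composition: same `l`, suitable `x + y = g' - g` gives a period-1 square. -/
lemma Sh1 (hs : Supp v n) (hq : NoSq v) {g l lam rho g' lam' rho' x y : ℤ}
    (P : Pat v n g l lam rho) (P' : Pat v n g' l lam' rho')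
    (hx1 : 1 ≤ x) (hx2 : x ≤ rho) (hy1 : 1 ≤ y) (hy2 : y ≤ lam')
    (hxy : x + y = g' - g) : False := by
  have r1 := P.right x hx1 hx2
  have r2 := P'.left y hy1 hy2
  rw [show g' + 1 - y = g + x + 1 by omega, show g' + l - y = g + l + x by omega] at r2
  apply hq (g + x) 1 le_rfl
  · intro i h1 h2
    have : i = g + x := by omega
    subst this
    rw [r1, ← r2]
  · rw [(hs _)]
    constructor
    · have := P.hl; have := P.hlam; have := P.hrho; have := P.hsum; have := P.hg; have := P.hn; have := P'.hl; have := P'.hlam; have := P'.hrho; have := P'.hsum; have := P'.hg; have := P'.hn; omega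
    · have := P.hl; have := P.hlam; have := P.hrho; have := P.hsum; have := P.hg; have := P.hn; have := P'.hl; have := P'.hlam; have := P'.hrho; have := P'.hsum; have := P'.hg; have := P'.hn; omega
  · rw [show g + x + 2*1 - 1 = g + x + 1 by ring, r2, (hs _)]
    constructor
    · have := P.hl; have := P.hlam; have := P.hrho; have := P.hsum; have := P.hg; have := P.hn; have := P'.hl; have := P'.hlam; have := P'.hrho; have := P'.hsum; have := P'.hg; have := P'.hn; omega
    · have := P.hl; have := P.hlam; have := P.hrho; have := P.hsum; have := P.hg; have := P.hn; have := P'.hl; have := P'.hlam; have := P'.hrho; have := P'.hsum; have := P'.hg; have := P'.hn; omega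

/-- union of two period-`l` windows. -/
lemma T4 (hs : Supp v n) (hq : NoSq v) {g l lam rho g' lam' rho' : ℤ}
    (P : Pat v n g l lam rho) (P' : Pat v n g' l lam' rho')
    (hd1 : 1 ≤ g' - g) (hd2 : g' - g ≤ rho) (hsz : l ≤ g' - g + rho') : False := by
  have hrel : ∀ i, g + 1 ≤ i → i < g + 1 + l → v i = v (i + l) := by
    intro i h1 h2
    by_cases hc : i ≤ g + rho
    · have := P.right (i - g) (by omega) (by omega)
      rw [show g + (i - g) = i by ring, show g + l + (i - g) = i + l by ring] at this
      exact this
    · have := P'.right (i - g') (by omega) (by have := P.hl; have := P.hlam; have := P.hrho; have := P.hsum; have := P.hg; have := P.hn; have := P'.hl; have := P'.hlam; have := P'.hrho; have := P'.hsum; have := P'.hg; have := P'.hn; omega)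
      rw [show g' + (i - g') = i by ring, show g' + l + (i - g') = i + l by ring] at this
      exact this
  apply hq (g + 1) l (by have := P.hl; have := P.hlam; have := P.hrho; have := P.hsum; have := P.hg; have := P.hn; have := P'.hl; have := P'.hlam; have := P'.hrho; have := P'.hsum; have := P'.hg; have := P'.hn; omega) hrel
  · rw [(hs _)]
    constructor
    · have := P.hl; have := P.hlam; have := P.hrho; have := P.hsum; have := P.hg; have := P.hn; have := P'.hl; have := P'.hlam; have := P'.hrho; have := P'.hsum; have := P'.hg; have := P'.hn; omega
    · have := P.hl; have := P.hlam; have := P.hrho; have := P.hsum; have := P.hg; have := P.hn; have := P'.hl; have := P'.hlam; have := P'.hrho; have := P'.hsum; have := P'.hg; have := P'.hn; omega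
  · have h1 := hrel (g + l) (by have := P.hl; have := P.hlam; have := P.hrho; have := P.hsum; have := P.hg; have := P.hn; have := P'.hl; have := P'.hlam; have := P'.hrho; have := P'.hsum; have := P'.hg; have := P'.hn; omega) (by omega)
    rw [show g + 1 + 2*l - 1 = g + l + l by ring, ← h1, (hs _)]
    constructor
    · have := P.hl; have := P.hlam; have := P.hrho; have := P.hsum; have := P.hg; have := P.hn; have := P'.hl; have := P'.hlam; have := P'.hrho; have := P'.hsum; have := P'.hg; have := P'.hn; omega
    · have := P.hl; have := P.hlam; have := P.hrho; have := P.hsum; have := P.hg; have := P.hn; have := P'.hl; have := P'.hlam; have := P'.hrho; have := P'.hsum; have := P'.hg; have := P'.hn; omega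

/-- right-side Fine–Wilf-style composition for different lengths. -/
lemma PT1R (hs : Supp v n) (hq : NoSq v) {g l lam rho g' l' lam' rho' : ℤ}
    (P : Pat v n g l lam rho) (P' : Pat v n g' l' lam' rho')
    (hll : l < l')
    (hrr : l' - l + |(g' + l') - (g + l)| ≤ rho)
    (hrr' : l' - l + |(g' + l') - (g + l)| ≤ rho') : False := by
  set δ : ℤ := l' - l with hδ
  set e : ℤ := (g' + l') - (g + l) with he
  have hδ1 : 1 ≤ δ := by omega
  set x₀ : ℤ := max 1 (1 + e) with hx₀
  have habs : 0 ≤ e → |e| = e := fun h => abs_of_nonneg h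
  have hx₀le : x₀ ≤ 1 + |e| := by
    rcases abs_cases e with ⟨h1, h2⟩ | ⟨h1, h2⟩ <;> omega
  have hx₀ge1 : 1 ≤ x₀ := le_max_left _ _
  have hx₀gee : 1 + e ≤ x₀ := le_max_right _ _
  -- the key relations
  have key : ∀ x : ℤ, x₀ ≤ x → x ≤ x₀ + δ - 1 → v (g + x - δ) = v (g + x) := by
    intro x h1 h2
    have hc1 : 1 ≤ x := by omega
    have hc2 : x ≤ rho := by
      rcases abs_cases e with ⟨ha1, ha2⟩ | ⟨ha1, ha2⟩ <;> omega
    have hc3 : 1 ≤ x - e := by omega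
    have hc4 : x - e ≤ rho' := by
      rcases abs_cases e with ⟨ha1, ha2⟩ | ⟨ha1, ha2⟩ <;> omega
    have r1 := P.right x hc1 hc2
    have r2 := P'.right (x - e) hc3 hc4
    rw [show g' + l' + (x - e) = g + l + x by omega, show g' + (x - e) = g + x - δ by omega] at r2
    rw [r2, r1]
  apply hq (g + x₀ - δ) δ hδ1
  · intro i h1 h2
    have := key (i - g + δ) (by omega) (by omega)
    rw [show g + (i - g + δ) - δ = i by ring, show g + (i - g + δ) = i + δ by ring] at this
    exact this
  · have h0 := key x₀ le_rfl (by omega)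
    rw [h0, (hs _)]
    constructor
    · have := P.hl; have := P.hlam; have := P.hrho; have := P.hsum; have := P.hg; have := P.hn; have := P'.hl; have := P'.hlam; have := P'.hrho; have := P'.hsum; have := P'.hg; have := P'.hn; omega
    · have hc2 : x₀ ≤ rho := by rcases abs_cases e with ⟨ha1, ha2⟩ | ⟨ha1, ha2⟩ <;> omega
      have := P.hl; have := P.hlam; have := P.hrho; have := P.hsum; have := P.hg; have := P.hn; have := P'.hl; have := P'.hlam; have := P'.hrho; have := P'.hsum; have := P'.hg; have := P'.hn; omega
  · rw [show g + x₀ - δ + 2*δ - 1 = g + (x₀ + δ - 1) by ring, (hs _)]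
    constructor
    · have := P.hl; have := P.hlam; have := P.hrho; have := P.hsum; have := P.hg; have := P.hn; have := P'.hl; have := P'.hlam; have := P'.hrho; have := P'.hsum; have := P'.hg; have := P'.hn; omega
    · have hc2 : x₀ + δ - 1 ≤ rho := by
        rcases abs_cases e with ⟨ha1, ha2⟩ | ⟨ha1, ha2⟩ <;> omega
      have := P.hl; have := P.hlam; have := P.hrho; have := P.hsum; have := P.hg; have := P.hn; have := P'.hl; have := P'.hlam; have := P'.hrho; have := P'.hsum; have := P'.hg; have := P'.hn; omega

/-- left-side Fine–Wilf-style composition for different lengths. -/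
lemma PT1L (hs : Supp v n) (hq : NoSq v) {g l lam rho g' l' lam' rho' : ℤ}
    (P : Pat v n g l lam rho) (P' : Pat v n g' l' lam' rho')
    (hll : l < l')
    (hrr : l' - l + |(g' + l') - (g + l)| ≤ lam)
    (hrr' : l' - l + |(g' + l') - (g + l)| ≤ lam') : False := by
  set δ : ℤ := l' - l with hδ
  set e : ℤ := (g' + l') - (g + l) with he
  have hδ1 : 1 ≤ δ := by omega
  set x₀ : ℤ := max 1 (1 - e) with hx₀
  have hx₀le : x₀ ≤ 1 + |e| := by
    rcases abs_cases e with ⟨h1, h2⟩ | ⟨h1, h2⟩ <;> omega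
  have hx₀ge1 : 1 ≤ x₀ := le_max_left _ _
  have hx₀gee : 1 - e ≤ x₀ := le_max_right _ _
  set x₁ : ℤ := x₀ + δ - 1 with hx₁
  have key : ∀ x : ℤ, x₀ ≤ x → x ≤ x₁ → v (g + 1 - x - δ) = v (g + 1 - x) := by
    intro x h1 h2
    have hc1 : 1 ≤ x := by omega
    have hc2 : x ≤ lam := by
      rcases abs_cases e with ⟨ha1, ha2⟩ | ⟨ha1, ha2⟩ <;> omega
    have hc3 : 1 ≤ x + e := by omega
    have hc4 : x + e ≤ lam' := by
      rcases abs_cases e with ⟨ha1, ha2⟩ | ⟨ha1, ha2⟩ <;> omega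
    have r1 := P.left x hc1 hc2
    have r2 := P'.left (x + e) hc3 hc4
    rw [show g' + l' - (x + e) = g + l - x by omega, show g' + 1 - (x + e) = g + 1 - x - δ by omega] at r2
    rw [r2, r1]
  apply hq (g + 1 - x₁ - δ) δ hδ1
  · intro i h1 h2
    have := key (g + 1 - δ - i) (by omega) (by omega)
    rw [show g + 1 - (g + 1 - δ - i) - δ = i by ring, show g + 1 - (g + 1 - δ - i) = i + δ by ring] at this
    exact this
  · have h0 := key x₁ (by omega) le_rfl
    rw [h0, (hs _)]
    constructor
    · have hc2 : x₁ ≤ lam := by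
        rcases abs_cases e with ⟨ha1, ha2⟩ | ⟨ha1, ha2⟩ <;> omega
      have := P.hl; have := P.hlam; have := P.hrho; have := P.hsum; have := P.hg; have := P.hn; have := P'.hl; have := P'.hlam; have := P'.hrho; have := P'.hsum; have := P'.hg; have := P'.hn; omega
    · have := P.hl; have := P.hlam; have := P.hrho; have := P.hsum; have := P.hg; have := P.hn; have := P'.hl; have := P'.hlam; have := P'.hrho; have := P'.hsum; have := P'.hg; have := P'.hn; omega
  · rw [show g + 1 - x₁ - δ + 2*δ - 1 = g + 1 - x₀ by omega, (hs _)]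
    constructor
    · have hc2 : x₀ ≤ lam := by
        rcases abs_cases e with ⟨ha1, ha2⟩ | ⟨ha1, ha2⟩ <;> omega
      have := P.hl; have := P.hlam; have := P.hrho; have := P.hsum; have := P.hg; have := P.hn; have := P'.hl; have := P'.hlam; have := P'.hrho; have := P'.hsum; have := P'.hg; have := P'.hn; omega
    · have := P.hl; have := P.hlam; have := P.hrho; have := P.hsum; have := P.hg; have := P.hn; have := P'.hl; have := P'.hlam; have := P'.hrho; have := P'.hsum; have := P'.hg; have := P'.hn; omega

lemma Dfacts {L : ℤ} (hL : 300 ≤ L) : 5 * (L/5) ≤ L ∧ L - 4 ≤ 5 * (L/5) ∧ 60 ≤ L/5 := by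
  have h1 := Int.mul_ediv_add_emod L 5
  have h2 := Int.emod_nonneg L (by norm_num : (5:ℤ) ≠ 0)
  have h3 := Int.emod_lt_of_pos L (by norm_num : (0:ℤ) < 5)
  omega

section classlemmas

/-- two L-heavy events with close gaps and different lengths have far-apart lengths. -/
lemma heavyL_far (hs : Supp v n) (hq : NoSq v) {L : ℤ} (hL : 300 ≤ L)
    {g l lam rho g' l' lam' rho' : ℤ}
    (P : Pat v n g l lam rho) (P' : Pat v n g' l' lam' rho')
    (hl1 : L ≤ l) (hl2 : l ≤ 2*L - 1) (hl1' : L ≤ l') (hl2' : l' ≤ 2*L - 1)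
    (hd : |g - g'| ≤ L/5 - 1) (hv : l - 1 ≤ 2 * lam) (hv' : l' - 1 ≤ 2 * lam') (hne : l ≠ l') :
    3 * L ≤ 20 * |l - l'| := by
  obtain ⟨hD1, hD2, hD3⟩ := Dfacts hL
  have main : ∀ (g₁ l₁ lam₁ rho₁ g₂ l₂ lam₂ rho₂ : ℤ),
      Pat v n g₁ l₁ lam₁ rho₁ → Pat v n g₂ l₂ lam₂ rho₂ →
      l₁ < l₂ → L ≤ l₁ → l₁ - 1 ≤ 2 * lam₁ → l₂ - 1 ≤ 2 * lam₂ →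
      |g₁ - g₂| ≤ L/5 - 1 → 3 * L ≤ 20 * (l₂ - l₁) := by
    intro g₁ l₁ lam₁ rho₁ g₂ l₂ lam₂ rho₂ Q Q' hlt hLl hh hh' hgd
    by_contra hcon
    push_neg at hcon
    have he : |(g₂ + l₂) - (g₁ + l₁)| ≤ |g₁ - g₂| + (l₂ - l₁) := by
      rcases abs_cases (g₁ - g₂) with ⟨a1, a2⟩ | ⟨a1, a2⟩ <;>
      rcases abs_cases ((g₂ + l₂) - (g₁ + l₁)) with ⟨b1, b2⟩ | ⟨b1, b2⟩ <;> omega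
    apply PT1L hs hq Q Q' hlt <;>
    · rcases abs_cases ((g₂ + l₂) - (g₁ + l₁)) with ⟨b1, b2⟩ | ⟨b1, b2⟩ <;> omega
  rcases lt_or_gt_of_ne hne with h | h
  · have := main g l lam rho g' l' lam' rho' P P' h hl1 hv hv' hd
    rcases abs_cases (l - l') with ⟨b1, b2⟩ | ⟨b1, b2⟩ <;> omega
  · have := main g' l' lam' rho' g l lam rho P' P h hl1' hv' hv (by rwa [abs_sub_comm])
    rcases abs_cases (l - l') with ⟨b1, b2⟩ | ⟨b1, b2⟩ <;> omega

lemma heavyR_far (hs : Supp v n) (hq : NoSq v) {L : ℤ} (hL : 300 ≤ L)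
    {g l lam rho g' l' lam' rho' : ℤ}
    (P : Pat v n g l lam rho) (P' : Pat v n g' l' lam' rho')
    (hl1 : L ≤ l) (hl2 : l ≤ 2*L - 1) (hl1' : L ≤ l') (hl2' : l' ≤ 2*L - 1)
    (hd : |g - g'| ≤ L/5 - 1) (hv : l - 1 ≤ 2 * rho) (hv' : l' - 1 ≤ 2 * rho') (hne : l ≠ l') :
    3 * L ≤ 20 * |l - l'| := by
  obtain ⟨hD1, hD2, hD3⟩ := Dfacts hL
  have main : ∀ (g₁ l₁ lam₁ rho₁ g₂ l₂ lam₂ rho₂ : ℤ),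
      Pat v n g₁ l₁ lam₁ rho₁ → Pat v n g₂ l₂ lam₂ rho₂ →
      l₁ < l₂ → L ≤ l₁ → l₁ - 1 ≤ 2 * rho₁ → l₂ - 1 ≤ 2 * rho₂ →
      |g₁ - g₂| ≤ L/5 - 1 → 3 * L ≤ 20 * (l₂ - l₁) := by
    intro g₁ l₁ lam₁ rho₁ g₂ l₂ lam₂ rho₂ Q Q' hlt hLl hh hh' hgd
    by_contra hcon
    push_neg at hcon
    apply PT1R hs hq Q Q' hlt <;>
    · rcases abs_cases ((g₂ + l₂) - (g₁ + l₁)) with ⟨b1, b2⟩ | ⟨b1, b2⟩ <;>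
      rcases abs_cases (g₁ - g₂) with ⟨a1, a2⟩ | ⟨a1, a2⟩ <;> omega
  rcases lt_or_gt_of_ne hne with h | h
  · have := main g l lam rho g' l' lam' rho' P P' h hl1 hv hv' hd
    rcases abs_cases (l - l') with ⟨b1, b2⟩ | ⟨b1, b2⟩ <;> omega
  · have := main g' l' lam' rho' g l lam rho P' P h hl1' hv' hv (by rwa [abs_sub_comm])
    rcases abs_cases (l - l') with ⟨b1, b2⟩ | ⟨b1, b2⟩ <;> omega

/-- two L-heavy events with the same length have gaps within 1. -/
lemma heavyL_close (hs : Supp v n) (hq : NoSq v) {L : ℤ} (hL : 300 ≤ L)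
    {g l lam rho g' l' lam' rho' : ℤ}
    (P : Pat v n g l lam rho) (P' : Pat v n g' l' lam' rho')
    (hl1 : L ≤ l) (hl2 : l ≤ 2*L - 1) (hl1' : L ≤ l') (hl2' : l' ≤ 2*L - 1)
    (hd : |g - g'| ≤ L/5 - 1) (hv : l - 1 ≤ 2 * lam) (hv' : l' - 1 ≤ 2 * lam') (heq : l = l') :
    |g - g'| ≤ 1 := by
  obtain ⟨hD1, hD2, hD3⟩ := Dfacts hL
  subst heq
  by_contra hcon
  push_neg at hcon
  rcases abs_cases (g - g') with ⟨a1, a2⟩ | ⟨a1, a2⟩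
  · -- g' < g : P' is the left event
    exact Sh1 hs hq P' P (le_refl 1) P'.hrho (by omega : 1 ≤ (g - g') - 1)
      (by have := P.hl; omega) (by omega)
  · exact Sh1 hs hq P P' (le_refl 1) P.hrho (by omega : 1 ≤ (g' - g) - 1)
      (by have := P'.hl; omega) (by omega)

lemma heavyR_close (hs : Supp v n) (hq : NoSq v) {L : ℤ} (hL : 300 ≤ L)
    {g l lam rho g' l' lam' rho' : ℤ}
    (P : Pat v n g l lam rho) (P' : Pat v n g' l' lam' rho')
    (hl1 : L ≤ l) (hl2 : l ≤ 2*L - 1) (hl1' : L ≤ l') (hl2' : l' ≤ 2*L - 1)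
    (hd : |g - g'| ≤ L/5 - 1) (hv : l - 1 ≤ 2 * rho) (hv' : l' - 1 ≤ 2 * rho') (heq : l = l') :
    |g - g'| ≤ 1 := by
  obtain ⟨hD1, hD2, hD3⟩ := Dfacts hL
  subst heq
  by_contra hcon
  push_neg at hcon
  have main : ∀ (g₁ lam₁ rho₁ g₂ lam₂ rho₂ : ℤ),
      Pat v n g₁ l lam₁ rho₁ → Pat v n g₂ l lam₂ rho₂ →
      l - 1 ≤ 2 * rho₁ → 2 ≤ g₂ - g₁ → g₂ - g₁ ≤ L/5 - 1 → False := by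
    intro g₁ lam₁ rho₁ g₂ lam₂ rho₂ Q Q' hh hd2 hd3
    by_cases hlam : 1 ≤ lam₂
    · exact Sh1 hs hq Q Q' (by omega : 1 ≤ (g₂ - g₁) - 1) (by omega) le_rfl hlam (by omega)
    · have h0 : lam₂ = 0 := by have := Q'.hlam; omega
      have hr : rho₂ = l - 1 := by have := Q'.hsum; omega
      exact T4 hs hq Q Q' (by omega) (by omega) (by omega)
  rcases abs_cases (g - g') with ⟨a1, a2⟩ | ⟨a1, a2⟩
  · exact main g' lam' rho' g lam rho P' P hv' (by omega) (by omega)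
  · exact main g lam rho g' lam' rho' P P' hv (by omega) (by omega)

end classlemmas
lemma two_of_close (S : Finset ℤ) (h : ∀ a ∈ S, ∀ b ∈ S, |a - b| ≤ 1) : S.card ≤ 2 := by
  rcases S.eq_empty_or_nonempty with rfl | hne
  · simp
  · have hsub : S ⊆ Finset.Icc (S.min' hne) (S.min' hne + 1) := by
      intro a ha
      rw [Finset.mem_Icc]
      refine ⟨S.min'_le a ha, ?_⟩
      have := h a ha (S.min' hne) (S.min'_mem hne)
      rcases abs_cases (a - S.min' hne) with ⟨h1,h2⟩|⟨h1,h2⟩ <;> omega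
    have := Finset.card_le_card hsub
    rw [Int.card_Icc] at this
    have h2 : S.min' hne + 1 + 1 - S.min' hne = 2 := by ring
    rw [h2] at this
    simpa using this

lemma sep7 {L : ℤ} (hL : 300 ≤ L) (T : Finset ℤ)
    (hT : ∀ x ∈ T, L ≤ x ∧ x ≤ 2*L - 1)
    (hsep : ∀ x ∈ T, ∀ y ∈ T, x ≠ y → 3 * L ≤ 20 * |x - y|) : T.card ≤ 7 := by
  have h3L : (0:ℤ) < 3 * L := by omega
  have hcard : T.card ≤ (Finset.Icc (0:ℤ) 6).card := by
    apply Finset.card_le_card_of_injOn (fun x => (20 * (x - L)) / (3 * L))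
    · intro x hx
      obtain ⟨h1, h2⟩ := hT x hx
      rw [Finset.mem_coe, Finset.mem_Icc]
      refine ⟨Int.ediv_nonneg (by omega) (by omega), ?_⟩
      have : (20 * (x - L)) / (3 * L) < 7 := by
        rw [Int.ediv_lt_iff_lt_mul h3L]; omega
      exact Int.lt_add_one_iff.mp this
    · intro x hx y hy hxy
      simp only at hxy
      by_contra hne
      have hsp := hsep x hx y hy hne
      have m1 := Int.emod_nonneg (20 * (x - L)) (by omega : 3 * L ≠ 0)
      have m2 := Int.emod_nonneg (20 * (y - L)) (by omega : 3 * L ≠ 0)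
      have m3 := Int.emod_lt_of_pos (20 * (x - L)) h3L
      have m4 := Int.emod_lt_of_pos (20 * (y - L)) h3L
      have e1 := Int.mul_ediv_add_emod (20 * (x - L)) (3 * L)
      have e2 := Int.mul_ediv_add_emod (20 * (y - L)) (3 * L)
      have hprod : 3 * L * (20 * (x - L) / (3 * L)) = 3 * L * (20 * (y - L) / (3 * L)) := by
        rw [hxy]
      have e3 : 20 * (x - L) - 20 * (y - L)
          = (20 * (x - L)) % (3 * L) - (20 * (y - L)) % (3 * L) := by linarith
      rcases abs_cases (x - y) with ⟨h1,h2⟩|⟨h1,h2⟩ <;> linarith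
  simpa using hcard

lemma win_close {D a b : ℤ} (hD : 0 < D) (h : a / D = b / D) : |a - b| ≤ D - 1 := by
  have m1 := Int.emod_nonneg a (by omega : D ≠ 0)
  have m2 := Int.emod_nonneg b (by omega : D ≠ 0)
  have m3 := Int.emod_lt_of_pos a hD
  have m4 := Int.emod_lt_of_pos b hD
  have e1 := Int.mul_ediv_add_emod a D
  have e2 := Int.mul_ediv_add_emod b D
  have hprod : D * (a / D) = D * (b / D) := by rw [h]
  have e3 : a - b = a % D - b % D := by linarith
  rcases abs_cases (a - b) with ⟨h1,h2⟩|⟨h1,h2⟩ <;> linarith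

lemma count_events (hs : Supp v n) (hq : NoSq v) (hn0 : 0 ≤ n) {L : ℤ} (hL : 300 ≤ L)
    (E : Finset (ℤ × ℤ × ℤ × ℤ))
    (hpat : ∀ p ∈ E, Pat v n p.1 p.2.1 p.2.2.1 p.2.2.2 ∧ L ≤ p.2.1 ∧ p.2.1 ≤ 2*L - 1)
    (hinj : ∀ p ∈ E, ∀ q ∈ E, p.1 = q.1 → p.2.1 = q.2.1 → p = q) :
    (E.card : ℤ) ≤ 28 * (n / (L/5) + 1) := by
  obtain ⟨hD1, hD2, hD3⟩ := Dfacts hL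
  set D : ℤ := L / 5 with hD
  have hDpos : (0:ℤ) < D := by omega
  have hfiber : ∀ w ∈ E.image (fun p => p.1 / D),
      ((E.filter (fun p => p.1 / D = w)).card ≤ 28) := by
    intro w _
    set F := E.filter (fun p => p.1 / D = w) with hF
    have hFsub : F ⊆ E := Finset.filter_subset _ _
    have hFwin : ∀ p ∈ F, ∀ q ∈ F, |p.1 - q.1| ≤ D - 1 := by
      intro p hp q hq2
      exact win_close hDpos (((Finset.mem_filter.mp hp).2).trans ((Finset.mem_filter.mp hq2).2).symm)
    have hclass : ∀ (G : Finset (ℤ × ℤ × ℤ × ℤ)), G ⊆ F →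
        (∀ p ∈ G, ∀ q ∈ G, p.2.1 ≠ q.2.1 → 3 * L ≤ 20 * |p.2.1 - q.2.1|) →
        (∀ p ∈ G, ∀ q ∈ G, p.2.1 = q.2.1 → |p.1 - q.1| ≤ 1) →
        G.card ≤ 14 := by
      intro G hGF hfar hclose
      have himg : (G.image (fun p => p.2.1)).card ≤ 7 := by
        apply sep7 hL
        · intro x hx
          obtain ⟨p, hp, rfl⟩ := Finset.mem_image.mp hx
          exact ⟨(hpat p (hFsub (hGF hp))).2.1, (hpat p (hFsub (hGF hp))).2.2⟩
        · intro x hx y hy hxy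
          obtain ⟨p, hp, rfl⟩ := Finset.mem_image.mp hx
          obtain ⟨q, hq2, rfl⟩ := Finset.mem_image.mp hy
          exact hfar p hp q hq2 hxy
      have hfib2 : ∀ b ∈ G.image (fun p => p.2.1),
          (G.filter (fun p => p.2.1 = b)).card ≤ 2 := by
        intro b _
        have himginj : ((G.filter (fun p => p.2.1 = b)).image (fun p => p.1)).card
            = (G.filter (fun p => p.2.1 = b)).card := by
          apply Finset.card_image_of_injOn
          intro p hp q hq2 hpq
          have hp' := Finset.mem_filter.mp hp
          have hq' := Finset.mem_filter.mp hq2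
          exact hinj p (hFsub (hGF hp'.1)) q (hFsub (hGF hq'.1)) hpq (by rw [hp'.2, hq'.2])
        rw [← himginj]
        apply two_of_close
        intro x hx y hy
        obtain ⟨p, hp, rfl⟩ := Finset.mem_image.mp hx
        obtain ⟨q, hq2, rfl⟩ := Finset.mem_image.mp hy
        have hp' := Finset.mem_filter.mp hp
        have hq' := Finset.mem_filter.mp hq2
        exact hclose p hp'.1 q hq'.1 (by rw [hp'.2, hq'.2])
      calc G.card ≤ 2 * (G.image (fun p => p.2.1)).card :=
            Finset.card_le_mul_card_image _ 2 hfib2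
        _ ≤ 2 * 7 := by omega
    have hL14 : (F.filter (fun p => p.2.1 - 1 ≤ 2 * p.2.2.1)).card ≤ 14 := by
      apply hclass _ (Finset.filter_subset _ _)
      · intro p hp q hq2 hne
        have hp' := Finset.mem_filter.mp hp
        have hq' := Finset.mem_filter.mp hq2
        obtain ⟨Pp, hp1, hp2⟩ := hpat p (hFsub hp'.1)
        obtain ⟨Pq, hq1, hq22⟩ := hpat q (hFsub hq'.1)
        exact heavyL_far hs hq hL Pp Pq hp1 hp2 hq1 hq22 (hFwin p hp'.1 q hq'.1) hp'.2 hq'.2 hne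
      · intro p hp q hq2 heq
        have hp' := Finset.mem_filter.mp hp
        have hq' := Finset.mem_filter.mp hq2
        obtain ⟨Pp, hp1, hp2⟩ := hpat p (hFsub hp'.1)
        obtain ⟨Pq, hq1, hq22⟩ := hpat q (hFsub hq'.1)
        exact heavyL_close hs hq hL Pp Pq hp1 hp2 hq1 hq22 (hFwin p hp'.1 q hq'.1) hp'.2 hq'.2 heq
    have hR14 : (F.filter (fun p => ¬ (p.2.1 - 1 ≤ 2 * p.2.2.1))).card ≤ 14 := by
      apply hclass _ (Finset.filter_subset _ _)
      · intro p hp q hq2 hne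
        have hp' := Finset.mem_filter.mp hp
        have hq' := Finset.mem_filter.mp hq2
        obtain ⟨Pp, hp1, hp2⟩ := hpat p (hFsub hp'.1)
        obtain ⟨Pq, hq1, hq22⟩ := hpat q (hFsub hq'.1)
        have hv : p.2.1 - 1 ≤ 2 * p.2.2.2 := by have := Pp.hsum; omega
        have hv' : q.2.1 - 1 ≤ 2 * q.2.2.2 := by have := Pq.hsum; omega
        exact heavyR_far hs hq hL Pp Pq hp1 hp2 hq1 hq22 (hFwin p hp'.1 q hq'.1) hv hv' hne
      · intro p hp q hq2 heq
        have hp' := Finset.mem_filter.mp hp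
        have hq' := Finset.mem_filter.mp hq2
        obtain ⟨Pp, hp1, hp2⟩ := hpat p (hFsub hp'.1)
        obtain ⟨Pq, hq1, hq22⟩ := hpat q (hFsub hq'.1)
        have hv : p.2.1 - 1 ≤ 2 * p.2.2.2 := by have := Pp.hsum; omega
        have hv' : q.2.1 - 1 ≤ 2 * q.2.2.2 := by have := Pq.hsum; omega
        exact heavyR_close hs hq hL Pp Pq hp1 hp2 hq1 hq22 (hFwin p hp'.1 q hq'.1) hv hv' heq
    have := Finset.card_filter_add_card_filter_not
      (s := F) (p := fun p => p.2.1 - 1 ≤ 2 * p.2.2.1)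
    omega
  have hmain : E.card ≤ 28 * (E.image (fun p => p.1 / D)).card :=
    Finset.card_le_mul_card_image _ 28 hfiber
  have himgsub : (E.image (fun p => p.1 / D)) ⊆ Finset.Icc (0:ℤ) (n / D) := by
    intro w hw
    obtain ⟨p, hp, rfl⟩ := Finset.mem_image.mp hw
    obtain ⟨Pp, _, _⟩ := hpat p hp
    have h0 : 0 ≤ p.1 := by have := Pp.hlam; have := Pp.hg; omega
    have h1 : p.1 ≤ n := by have := Pp.hn; have := Pp.hl; have := Pp.hrho; omega
    rw [Finset.mem_Icc]
    exact ⟨Int.ediv_nonneg h0 (by omega), Int.ediv_le_ediv hDpos h1⟩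
  have himgcard : (E.image (fun p => p.1 / D)).card ≤ (n / D + 1).toNat := by
    have := Finset.card_le_card himgsub
    rwa [Int.card_Icc, show n / D + 1 - 0 = n / D + 1 by ring] at this
  have hnD : 0 ≤ n / D := Int.ediv_nonneg hn0 (by omega)
  have : E.card ≤ 28 * (n / D + 1).toNat := by omega
  have h2 : ((n / D + 1).toNat : ℤ) = n / D + 1 := Int.toNat_of_nonneg (by omega)
  omega
lemma getq_insertIdx_lt (W : List α) (b : ℕ) (c : α) (hb : b ≤ W.length) {m : ℕ} (hm : m < b) :
    (W.insertIdx b c)[m]? = W[m]? := by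
  have h1 : m < W.length := by omega
  have h2 : m < (W.insertIdx b c).length := by rw [List.length_insertIdx_of_le_length hb c]; omega
  rw [List.getElem?_eq_getElem h2, List.getElem?_eq_getElem h1]
  exact congrArg some (List.getElem_insertIdx_of_lt hm h2)

lemma getq_insertIdx_self (W : List α) (b : ℕ) (c : α) (hb : b ≤ W.length) :
    (W.insertIdx b c)[b]? = some c := by
  have h2 : b < (W.insertIdx b c).length := by rw [List.length_insertIdx_of_le_length hb c]; omega
  rw [List.getElem?_eq_getElem h2]
  exact congrArg some (List.getElem_insertIdx_self h2)

lemma getq_insertIdx_ge (W : List α) (b : ℕ) (c : α) (hb : b ≤ W.length) {m : ℕ} (hm : b < m) :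
    (W.insertIdx b c)[m]? = W[m-1]? := by
  by_cases h3 : m ≤ W.length
  · have hlt : b + (m - b - 1) < W.length := by omega
    have hre : m = b + (m - b - 1) + 1 := by omega
    have h2 : b + (m - b - 1) + 1 < (W.insertIdx b c).length := by
      rw [List.length_insertIdx_of_le_length hb c]; omega
    have h4 := List.getElem_insertIdx_add_succ W c b (m - b - 1) hlt h2
    calc (W.insertIdx b c)[m]? = (W.insertIdx b c)[b + (m - b - 1) + 1]? := by rw [← hre]
      _ = some ((W.insertIdx b c)[b + (m - b - 1) + 1]'h2) := List.getElem?_eq_getElem h2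
      _ = some (W[b + (m - b - 1)]'hlt) := congrArg some h4
      _ = W[b + (m - b - 1)]? := (List.getElem?_eq_getElem hlt).symm
      _ = W[m-1]? := by rw [show b + (m - b - 1) = m - 1 by omega]
  · rw [List.getElem?_eq_none_iff.mpr (by rw [List.length_insertIdx_of_le_length hb c]; omega),
        List.getElem?_eq_none_iff.mpr (by omega)]

lemma uof_insertIdx (W : List α) (b : ℕ) (c : α) (hb : b ≤ W.length) (i : ℤ) :
    uof (W.insertIdx b c) i =
      if i ≤ (b:ℤ) then uof W i else if i = (b:ℤ)+1 then some c else uof W (i-1) := by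
  by_cases hi : 0 < i
  · have hL : uof (W.insertIdx b c) i = (W.insertIdx b c)[(i-1).toNat]? := by
      unfold uof; rw [if_pos hi]
    by_cases h1 : i ≤ (b:ℤ)
    · rw [if_pos h1, hL, getq_insertIdx_lt W b c hb (by omega : (i-1).toNat < b)]
      unfold uof; rw [if_pos hi]
    · rw [if_neg h1]
      by_cases h2 : i = (b:ℤ)+1
      · rw [if_pos h2, hL, show (i-1).toNat = b by omega, getq_insertIdx_self W b c hb]
      · rw [if_neg h2, hL, getq_insertIdx_ge W b c hb (by omega : b < (i-1).toNat)]
        unfold uof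
        rw [if_pos (by omega : (0:ℤ) < i - 1), show (i-1).toNat - 1 = (i-1-1).toNat by omega]
  · unfold uof
    rw [if_neg hi, if_pos (by omega : i ≤ (b:ℤ)), if_neg hi]

lemma factor_sq_rels {W : List α} {a l b : ℕ} {c : α} (h : SquareCompleting W a l b c) :
    ∀ j : ℤ, 0 ≤ j → j < (l:ℤ) →
      uof (W.insertIdx b c) ((a:ℤ) + j) = uof (W.insertIdx b c) ((a:ℤ) + l + j) := by
  obtain ⟨ha, hl, hab, hbn, hsz, heq⟩ := h
  intro j hj0 hjl
  set X := W.insertIdx b c with hX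
  have hlen : X.length = W.length + 1 := List.length_insertIdx_of_le_length hbn c
  set k : ℕ := j.toNat with hk
  have hkl : k < l := by omega
  have h1 : factor X a (a + l) = (X.drop (a-1)).take l := by
    unfold factor; rw [show a + l - a = l by omega]
  have h2 : factor X (a+l) (a + 2*l) = (X.drop (a+l-1)).take l := by
    unfold factor; rw [show a + 2*l - (a+l) = l by omega]
  have hpt := congrArg (fun t : List α => t[k]?) heq
  rw [h1, h2] at hpt
  simp only [List.getElem?_take, if_pos hkl, List.getElem?_drop] at hpt
  have e1 : uof X ((a:ℤ) + j) = X[a - 1 + k]? := by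
    unfold uof; rw [if_pos (by omega), show ((a:ℤ) + j - 1).toNat = a - 1 + k by omega]
  have e2 : uof X ((a:ℤ) + l + j) = X[a + l - 1 + k]? := by
    unfold uof; rw [if_pos (by omega), show ((a:ℤ) + l + j - 1).toNat = a + l - 1 + k by omega]
  rw [e1, e2, hpt]

lemma extract_pos {W : List α} (hq : NoSq (uof W)) {a l b : ℕ} {c : α}
    (h : SquareCompleting W a l b c) (hl2 : 2 ≤ l) (hsgn : b + 2 ≤ a + l) :
    Pat (uof W) W.length b l ((b:ℤ) - a + 1) ((a:ℤ) + l - 2 - b) ∧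
      uof W ((b:ℤ) + l) = some c := by
  have hrel := factor_sq_rels h
  obtain ⟨ha, hl1, hab, hbn, hsz, -⟩ := h
  have hsupp : Supp (uof W) W.length := supp_uof W
  set u := uof W with hu
  set n : ℤ := (W.length : ℤ) with hn
  have key : ∀ j : ℤ, 0 ≤ j → j < (l:ℤ) →
      (if (a:ℤ)+j ≤ (b:ℤ) then u ((a:ℤ)+j) else if (a:ℤ)+j = (b:ℤ)+1 then some c else u ((a:ℤ)+j-1))
      = (if (a:ℤ)+(l:ℤ)+j ≤ (b:ℤ) then u ((a:ℤ)+(l:ℤ)+j)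
         else if (a:ℤ)+(l:ℤ)+j = (b:ℤ)+1 then some c else u ((a:ℤ)+(l:ℤ)+j-1)) := by
    intro j h0 h1
    have h3 := hrel j h0 h1
    rwa [uof_insertIdx W b c hbn, uof_insertIdx W b c hbn] at h3
  have hbne : (b:ℤ) ≠ (a:ℤ) + l - 2 := by
    intro hbeq
    apply hq (a:ℤ) ((l:ℤ) - 1) (by omega)
    · intro i hi1 hi2
      have h3 := key (i - a) (by omega) (by omega)
      rw [if_pos (by omega), if_neg (by omega), if_neg (by omega)] at h3
      rw [show (a:ℤ) + (i - a) = i by ring,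
          show (a:ℤ) + l + (i - a) - 1 = i + ((l:ℤ) - 1) by ring] at h3
      exact h3
    · exact (hsupp _).mpr ⟨by omega, by omega⟩
    · exact (hsupp _).mpr ⟨by omega, by omega⟩
  refine ⟨⟨by omega, by omega, by omega, by ring, by omega, by omega, ?_, ?_⟩, ?_⟩
  · intro x hx1 hx2
    have h3 := key ((b:ℤ) + 1 + x - a) (by omega) (by omega)
    rw [if_neg (by omega), if_neg (by omega), if_neg (by omega), if_neg (by omega)] at h3
    rw [show (a:ℤ) + ((b:ℤ)+1+x-a) - 1 = (b:ℤ) + x by ring,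
        show (a:ℤ) + l + ((b:ℤ)+1+x-a) - 1 = (b:ℤ) + l + x by ring] at h3
    exact h3
  · intro x hx1 hx2
    have h3 := key ((b:ℤ) + 1 - x - a) (by omega) (by omega)
    rw [if_pos (by omega), if_neg (by omega), if_neg (by omega)] at h3
    rw [show (a:ℤ) + ((b:ℤ)+1-x-a) = (b:ℤ)+1-x by ring,
        show (a:ℤ) + l + ((b:ℤ)+1-x-a) - 1 = (b:ℤ) + l - x by ring] at h3
    exact h3
  · have h3 := key ((b:ℤ) + 1 - a) (by omega) (by omega)
    rw [if_neg (by omega), if_pos (by omega), if_neg (by omega), if_neg (by omega)] at h3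
    rw [show (a:ℤ) + l + ((b:ℤ)+1-a) - 1 = (b:ℤ) + l by ring] at h3
    exact h3.symm

lemma extract_neg {W : List α} (hq : NoSq (uof W)) {a l b : ℕ} {c : α}
    (h : SquareCompleting W a l b c) (hl2 : 2 ≤ l) (hsgn : a + l ≤ b + 1) :
    Pat (vrev (uof W) W.length) W.length ((W.length:ℤ) - b) l
        ((a:ℤ) + 2*l - 2 - b) ((b:ℤ) - l - a + 1) ∧
      vrev (uof W) W.length ((W.length:ℤ) - b + l) = some c := by
  have hrel := factor_sq_rels h
  obtain ⟨ha, hl1, hab, hbn, hsz, -⟩ := h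
  have hsupp : Supp (uof W) W.length := supp_uof W
  set u := uof W with hu
  set n : ℤ := (W.length : ℤ) with hn
  have key : ∀ j : ℤ, 0 ≤ j → j < (l:ℤ) →
      (if (a:ℤ)+j ≤ (b:ℤ) then u ((a:ℤ)+j) else if (a:ℤ)+j = (b:ℤ)+1 then some c else u ((a:ℤ)+j-1))
      = (if (a:ℤ)+(l:ℤ)+j ≤ (b:ℤ) then u ((a:ℤ)+(l:ℤ)+j)
         else if (a:ℤ)+(l:ℤ)+j = (b:ℤ)+1 then some c else u ((a:ℤ)+(l:ℤ)+j-1)) := by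
    intro j h0 h1
    have h3 := hrel j h0 h1
    rwa [uof_insertIdx W b c hbn, uof_insertIdx W b c hbn] at h3
  have hup : (b:ℤ) ≤ (a:ℤ) + 2*l - 2 := by
    by_contra hcon
    push_neg at hcon
    apply hq (a:ℤ) (l:ℤ) (by omega)
    · intro i h1 h2
      have h3 := key (i - a) (by omega) (by omega)
      rw [if_pos (by omega), if_pos (by omega)] at h3
      rw [show (a:ℤ) + (i-a) = i by ring, show (a:ℤ) + l + (i-a) = i + l by ring] at h3
      exact h3
    · exact (hsupp _).mpr ⟨by omega, by omega⟩
    · exact (hsupp _).mpr ⟨by omega, by omega⟩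
  have hlow : (a:ℤ) + l ≤ (b:ℤ) := by
    by_contra hcon
    push_neg at hcon
    apply hq ((a:ℤ)+1) ((l:ℤ)-1) (by omega)
    · intro i h1 h2
      have h3 := key (i - a) (by omega) (by omega)
      rw [if_pos (by omega), if_neg (by omega), if_neg (by omega)] at h3
      rw [show (a:ℤ) + (i-a) = i by ring,
          show (a:ℤ) + l + (i-a) - 1 = i + ((l:ℤ)-1) by ring] at h3
      exact h3
    · exact (hsupp _).mpr ⟨by omega, by omega⟩
    · exact (hsupp _).mpr ⟨by omega, by omega⟩
  refine ⟨⟨by omega, by omega, by omega, by ring, by omega, by omega, ?_, ?_⟩, ?_⟩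
  · intro x hx1 hx2
    show u (n + 1 - (n - b + x)) = u (n + 1 - (n - b + l + x))
    rw [show n + 1 - (n - (b:ℤ) + x) = (b:ℤ) + 1 - x by ring,
        show n + 1 - (n - (b:ℤ) + l + x) = (b:ℤ) + 1 - l - x by ring]
    have h3 := key ((b:ℤ) + 1 - l - x - a) (by omega) (by omega)
    rw [if_pos (by omega), if_pos (by omega)] at h3
    rw [show (a:ℤ) + ((b:ℤ)+1-l-x-a) = (b:ℤ)+1-l-x by ring,
        show (a:ℤ) + l + ((b:ℤ)+1-l-x-a) = (b:ℤ)+1-x by ring] at h3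
    exact h3.symm
  · intro x hx1 hx2
    show u (n + 1 - (n - b + 1 - x)) = u (n + 1 - (n - b + l - x))
    rw [show n + 1 - (n - (b:ℤ) + 1 - x) = (b:ℤ) + x by ring,
        show n + 1 - (n - (b:ℤ) + l - x) = (b:ℤ) + 1 - l + x by ring]
    have h3 := key ((b:ℤ) + 1 - l + x - a) (by omega) (by omega)
    rw [if_pos (by omega), if_neg (by omega), if_neg (by omega)] at h3
    rw [show (a:ℤ) + ((b:ℤ)+1-l+x-a) = (b:ℤ)+1-l+x by ring,
        show (a:ℤ) + l + ((b:ℤ)+1-l+x-a) - 1 = (b:ℤ)+x by ring] at h3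
    exact h3.symm
  · show u (n + 1 - (n - b + l)) = some c
    rw [show n + 1 - (n - (b:ℤ) + l) = (b:ℤ) + 1 - l by ring]
    have h3 := key ((b:ℤ) + 1 - l - a) (by omega) (by omega)
    rw [if_pos (by omega), if_neg (by omega), if_pos (by omega)] at h3
    rw [show (a:ℤ) + ((b:ℤ)+1-l-a) = (b:ℤ)+1-l by ring] at h3
    exact h3
lemma final_arith {L n Q : ℤ} (hL : 300 ≤ L) (hn : 2*L - 1 ≤ n) (hQ : Q = n / (L/5)) :
    56 * (Q + 1) * L ≤ 320 * n := by
  obtain ⟨hD1, hD2, hD3⟩ := Dfacts hL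
  set D := L/5 with hD
  have h1 := Int.mul_ediv_add_emod n D
  have h2 := Int.emod_nonneg n (by omega : D ≠ 0)
  have h3 := Int.emod_lt_of_pos n (by omega : 0 < D)
  have hQ0 : 0 ≤ Q := by
    rw [hQ]; exact Int.ediv_nonneg (by omega) (by omega)
  have hDQ : D * Q ≤ n := by rw [hQ]; linarith
  have h60Q : 60 * Q ≤ D * Q := mul_le_mul_of_nonneg_right hD3 hQ0
  have hQL : Q * L ≤ Q * (5*D + 4) := mul_le_mul_of_nonneg_left (by omega) hQ0
  nlinarith [hDQ, h60Q, hQL, hQ0, hD3, hn, hL]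

end SCDR

/-- In an `n`-letter square-free word, for a family `A` of square-completing quadruples, no
two sharing the same pair `(b, c)`, and any `L ≥ 300`, the number of quadruples whose length
parameter `ℓ` satisfies `L ≤ ℓ ≤ 2L - 1` is at most `320n / L`. -/
theorem count_square_completing_dyadic_range {α : Type*} (W : List α) (n : ℕ)
    (hn : W.length = n) (hW : SquareFree W)
    (A : Finset (ℕ × ℕ × ℕ × α))
    (hA : ∀ q ∈ A, SquareCompleting W q.1 q.2.1 q.2.2.1 q.2.2.2)
    (hbc : ∀ q ∈ A, ∀ q' ∈ A, q.2.2.1 = q'.2.2.1 → q.2.2.2 = q'.2.2.2 → q = q')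
    (L : ℕ) (hL : 300 ≤ L) :
    ((∑ ℓ ∈ Finset.Icc L (2 * L - 1),
        (A.filter (fun q => q.2.1 = ℓ)).card : ℕ) : ℝ) ≤ 320 * n / L := by
  classical
  subst hn
  set n := W.length with hn
  have hsupp : SCDR.Supp (SCDR.uof W) (n:ℤ) := SCDR.supp_uof W
  have hq : SCDR.NoSq (SCDR.uof W) := SCDR.nosq_uof W hW
  have hsuppv : SCDR.Supp (SCDR.vrev (SCDR.uof W) (n:ℤ)) (n:ℤ) := SCDR.supp_vrev hsupp
  have hqv : SCDR.NoSq (SCDR.vrev (SCDR.uof W) (n:ℤ)) := SCDR.nosq_vrev hq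
  set s := A.filter (fun q => q.2.1 ∈ Finset.Icc L (2*L-1)) with hs
  have hsum : (∑ ℓ ∈ Finset.Icc L (2 * L - 1), (A.filter (fun q => q.2.1 = ℓ)).card) = s.card := by
    rw [Finset.card_eq_sum_card_fiberwise (s := s) (f := fun q : ℕ × ℕ × ℕ × α => q.2.1)
        (t := Finset.Icc L (2*L-1)) (fun x hx => (Finset.mem_filter.mp hx).2)]
    apply Finset.sum_congr rfl
    intro ℓ hℓ
    congr 1
    rw [hs, Finset.filter_filter]
    apply Finset.filter_congr
    intro q _
    constructor
    · intro h
      exact ⟨by rw [h]; exact hℓ, h⟩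
    · exact And.right
  rw [hsum]
  rcases s.eq_empty_or_nonempty with hse | hse
  · rw [hse]
    simp only [Finset.card_empty, Nat.cast_zero]
    apply div_nonneg
    · positivity
    · positivity
  · -- n is large enough
    obtain ⟨q0, hq0⟩ := hse
    have hq0' := Finset.mem_filter.mp hq0
    obtain ⟨ha0, hl0, -, -, hsz0, -⟩ := hA q0 hq0'.1
    have hq0icc := Finset.mem_Icc.mp hq0'.2
    have hnL : 2 * L - 1 ≤ n := by omega
    set P : ℕ × ℕ × ℕ × α → Prop := fun q => q.2.2.1 + 2 ≤ q.1 + q.2.1 with hP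
    have hsplit := Finset.card_filter_add_card_filter_not (s := s) (p := P)
    -- facts about members of s
    have hmem : ∀ q ∈ s, SquareCompleting W q.1 q.2.1 q.2.2.1 q.2.2.2 ∧
        L ≤ q.2.1 ∧ q.2.1 ≤ 2*L - 1 := by
      intro q hq1
      have h1 := Finset.mem_filter.mp hq1
      exact ⟨hA q h1.1, (Finset.mem_Icc.mp h1.2).1, (Finset.mem_Icc.mp h1.2).2⟩
    -- positive sign events
    set φp : ℕ × ℕ × ℕ × α → ℤ × ℤ × ℤ × ℤ := fun q =>
      ((q.2.2.1 : ℤ), (q.2.1 : ℤ), (q.2.2.1 : ℤ) - q.1 + 1, (q.1 : ℤ) + q.2.1 - 2 - q.2.2.1)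
      with hφp
    have hposfacts : ∀ q ∈ s.filter P,
        SCDR.Pat (SCDR.uof W) n ((q.2.2.1:ℤ)) ((q.2.1:ℤ)) ((q.2.2.1 : ℤ) - q.1 + 1)
          ((q.1 : ℤ) + q.2.1 - 2 - q.2.2.1) ∧
          SCDR.uof W ((q.2.2.1:ℤ) + q.2.1) = some q.2.2.2 := by
      intro q hq1
      have h1 := Finset.mem_filter.mp hq1
      obtain ⟨hsc, hL1, hL2⟩ := hmem q h1.1
      exact SCDR.extract_pos hq hsc (by omega) h1.2
    have hkeyinjp : ∀ q1 ∈ s.filter P, ∀ q2 ∈ s.filter P,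
        q1.2.2.1 = q2.2.2.1 → q1.2.1 = q2.2.1 → q1 = q2 := by
      intro q1 hq1 q2 hq2 hb hl
      have h1 := hposfacts q1 hq1
      have h2 := hposfacts q2 hq2
      have hv1 := h1.2
      rw [hb, hl, h2.2] at hv1
      exact hbc q1 (Finset.mem_filter.mp (Finset.filter_subset _ _ hq1)).1
        q2 (Finset.mem_filter.mp (Finset.filter_subset _ _ hq2)).1 hb
        (Option.some_injective _ hv1).symm
    have hcardp : ((s.filter P).image φp).card = (s.filter P).card := by
      apply Finset.card_image_of_injOn
      intro q1 hq1 q2 hq2 heq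
      rw [hφp] at heq
      simp only [Prod.mk.injEq] at heq
      obtain ⟨e1, e2, -, -⟩ := heq
      exact hkeyinjp q1 (Finset.mem_coe.mp hq1) q2 (Finset.mem_coe.mp hq2)
        (by exact_mod_cast e1) (by exact_mod_cast e2)
    have hcountp : (((s.filter P).image φp).card : ℤ) ≤ 28 * ((n:ℤ) / ((L:ℤ)/5) + 1) := by
      apply SCDR.count_events hsupp hq (by positivity) (by exact_mod_cast hL)
      · intro p hp
        obtain ⟨q1, hq1, rfl⟩ := Finset.mem_image.mp hp
        obtain ⟨hsc, hL1, hL2⟩ := hmem q1 (Finset.filter_subset _ _ hq1)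
        simp only [hφp]
        refine ⟨(hposfacts q1 hq1).1, by exact_mod_cast hL1, ?_⟩
        have : (q1.2.1 : ℤ) ≤ 2 * (L:ℤ) - 1 := by
          have h2L : 1 ≤ 2 * L := by omega
          omega
        exact this
      · intro p hp p' hp' he1 he2
        obtain ⟨q1, hq1, rfl⟩ := Finset.mem_image.mp hp
        obtain ⟨q2, hq2, rfl⟩ := Finset.mem_image.mp hp'
        rw [hφp] at he1 he2 ⊢
        simp only at he1 he2
        rw [hkeyinjp q1 hq1 q2 hq2 (by exact_mod_cast he1) (by exact_mod_cast he2)]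
    -- negative sign events
    set φn : ℕ × ℕ × ℕ × α → ℤ × ℤ × ℤ × ℤ := fun q =>
      ((n : ℤ) - q.2.2.1, (q.2.1 : ℤ), (q.1 : ℤ) + 2*q.2.1 - 2 - q.2.2.1,
        (q.2.2.1 : ℤ) - q.2.1 - q.1 + 1) with hφn
    have hnegfacts : ∀ q ∈ s.filter (fun q => ¬ P q),
        SCDR.Pat (SCDR.vrev (SCDR.uof W) (n:ℤ)) n ((n:ℤ) - q.2.2.1) ((q.2.1:ℤ))
          ((q.1 : ℤ) + 2*q.2.1 - 2 - q.2.2.1) ((q.2.2.1 : ℤ) - q.2.1 - q.1 + 1) ∧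
          SCDR.vrev (SCDR.uof W) (n:ℤ) ((n:ℤ) - q.2.2.1 + q.2.1) = some q.2.2.2 := by
      intro q hq1
      have h1 := Finset.mem_filter.mp hq1
      obtain ⟨hsc, hL1, hL2⟩ := hmem q h1.1
      have hsgn : q.1 + q.2.1 ≤ q.2.2.1 + 1 := by
        have := h1.2
        simp only [hP] at this
        omega
      exact SCDR.extract_neg hq hsc (by omega) hsgn
    have hkeyinjn : ∀ q1 ∈ s.filter (fun q => ¬ P q), ∀ q2 ∈ s.filter (fun q => ¬ P q),
        q1.2.2.1 = q2.2.2.1 → q1.2.1 = q2.2.1 → q1 = q2 := by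
      intro q1 hq1 q2 hq2 hb hl
      have h1 := hnegfacts q1 hq1
      have h2 := hnegfacts q2 hq2
      have hv1 := h1.2
      rw [hb, hl, h2.2] at hv1
      exact hbc q1 (Finset.mem_filter.mp (Finset.filter_subset _ _ hq1)).1
        q2 (Finset.mem_filter.mp (Finset.filter_subset _ _ hq2)).1 hb
        (Option.some_injective _ hv1).symm
    have hcardn : ((s.filter (fun q => ¬ P q)).image φn).card
        = (s.filter (fun q => ¬ P q)).card := by
      apply Finset.card_image_of_injOn
      intro q1 hq1 q2 hq2 heq
      rw [hφn] at heq
      simp only [Prod.mk.injEq] at heq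
      obtain ⟨e1, e2, -, -⟩ := heq
      exact hkeyinjn q1 (Finset.mem_coe.mp hq1) q2 (Finset.mem_coe.mp hq2)
        (by omega) (by exact_mod_cast e2)
    have hcountn : (((s.filter (fun q => ¬ P q)).image φn).card : ℤ)
        ≤ 28 * ((n:ℤ) / ((L:ℤ)/5) + 1) := by
      apply SCDR.count_events hsuppv hqv (by positivity) (by exact_mod_cast hL)
      · intro p hp
        obtain ⟨q1, hq1, rfl⟩ := Finset.mem_image.mp hp
        obtain ⟨hsc, hL1, hL2⟩ := hmem q1 (Finset.filter_subset _ _ hq1)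
        simp only [hφn]
        refine ⟨(hnegfacts q1 hq1).1, by exact_mod_cast hL1, ?_⟩
        have : (q1.2.1 : ℤ) ≤ 2 * (L:ℤ) - 1 := by
          have h2L : 1 ≤ 2 * L := by omega
          omega
        exact this
      · intro p hp p' hp' he1 he2
        obtain ⟨q1, hq1, rfl⟩ := Finset.mem_image.mp hp
        obtain ⟨q2, hq2, rfl⟩ := Finset.mem_image.mp hp'
        rw [hφn] at he1 he2 ⊢
        simp only at he1 he2
        rw [hkeyinjn q1 hq1 q2 hq2 (by omega) (by exact_mod_cast he2)]
    -- combine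
    have hcardsum : (s.card : ℤ) ≤ 56 * ((n:ℤ) / ((L:ℤ)/5) + 1) := by
      have c1 : ((s.filter P).card : ℤ) ≤ 28 * ((n:ℤ) / ((L:ℤ)/5) + 1) := by
        rw [← hcardp]; exact hcountp
      have c2 : ((s.filter (fun q => ¬ P q)).card : ℤ) ≤ 28 * ((n:ℤ) / ((L:ℤ)/5) + 1) := by
        rw [← hcardn]; exact hcountn
      have c3 : ((s.filter P).card : ℤ) + ((s.filter (fun q => ¬ P q)).card : ℤ)
          = (s.card : ℤ) := by exact_mod_cast hsplit
      linarith
    have harith := SCDR.final_arith (L := (L:ℤ)) (n := (n:ℤ)) (Q := (n:ℤ) / ((L:ℤ)/5))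
      (by exact_mod_cast hL) (by omega) rfl
    have hfin : (s.card : ℤ) * L ≤ 320 * n := by
      calc (s.card:ℤ) * L ≤ (56 * ((n:ℤ)/((L:ℤ)/5)+1)) * L :=
            mul_le_mul_of_nonneg_right hcardsum (by positivity)
        _ ≤ 320 * n := harith
    rw [le_div_iff₀ (by exact_mod_cast (show 0 < L by omega) : (0:ℝ) < (L:ℝ))]
    exact_mod_cast hfin
end

section
/- Let W be an extremal square-free word of length n over an alphabet Σ. Then for every gap b with 0 ≤ b ≤ n and every letter c ∈ Σ that is distinct from each letter of W adjacent to gap b (i.e., c is not the letter at position b when b ≥ 1 and not the letter at position b+1 when b ≤ n−1), there exist a positive integer a with a ≤ b + 1 and an integer ℓ ≥ 2 such that (a, ℓ, b, c) is a square-completing quadruple in W. Consequently, if |Σ| = k, there is a set of square-completing quadruples in W, no two sharing the same pair (b, c) and all with ℓ ≥ 2, of size at least (k − 2)(n + 1). -/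
lemma insertIdx_eq_tcd {α : Type*} (W : List α) (b : ℕ) (c : α) (h : b ≤ W.length) :
    W.insertIdx b c = W.take b ++ c :: W.drop b := by
  induction b generalizing W with
  | zero => simp [List.insertIdx]
  | succ b ih =>
    cases W with
    | nil => simp at h
    | cons x xs =>
      simp only [List.insertIdx_succ_cons, List.take_succ_cons, List.drop_succ_cons,
        List.cons_append]
      rw [ih xs (by simpa using h)]

lemma key {α : Type*} (W : List α) (hW : ExtremalSquareFree W) (b : ℕ) (hb : b ≤ W.length)
    (c : α) (h1 : 1 ≤ b → W[b - 1]? ≠ some c) (h2 : b + 1 ≤ W.length → W[b]? ≠ some c) :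
    ∃ a ℓ : ℕ, 1 ≤ a ∧ a ≤ b + 1 ∧ 2 ≤ ℓ ∧ SquareCompleting W a ℓ b c := by
  set W' := W.insertIdx b c with hW'def
  have hW' : W' = W.take b ++ c :: W.drop b := insertIdx_eq_tcd W b c hb
  have hext : IsExtension W W' := by
    refine ⟨W.take b, W.drop b, c, (List.take_append_drop b W).symm, by rw [hW']; simp⟩
  have hnsf := hW.2 W' hext
  unfold SquareFree at hnsf
  push_neg at hnsf
  obtain ⟨X, hX, s, t, hst⟩ := hnsf
  set ℓ := X.length with hℓ
  have hℓ1 : 1 ≤ ℓ := List.length_pos_iff.2 hX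
  -- length of W'
  have hlen : W'.length = W.length + 1 := List.length_insertIdx_of_le_length hb c
  have hlen2 : s.length + 2 * ℓ + t.length = W.length + 1 := by
    have := congrArg List.length hst
    simp at this; omega
  -- basic rearrangement
  have hst' : s ++ (X ++ (X ++ t)) = W' := by
    rw [← hst]; simp
  have hdropS : W'.drop s.length = X ++ (X ++ t) := by
    rw [← hst', List.drop_left]
  -- the square must contain position b
  have hsb : s.length ≤ b := by
    by_contra hcon
    push_neg at hcon
    -- X ++ X ++ t is a suffix of W.drop b
    have hXt : X ++ (X ++ t) <:+ W := by
      have hd : W'.drop (b + 1) = W.drop b := by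
        rw [hW', show W.take b ++ c :: W.drop b = (W.take b ++ [c]) ++ W.drop b by simp]
        exact List.drop_left' (by simp [List.length_take]; omega)
      have : W'.drop s.length = (W'.drop (b+1)).drop (s.length - (b+1)) := by
        rw [List.drop_drop]; congr 1; omega
      rw [hdropS, hd] at this
      exact this ▸ ((List.drop_suffix _ _).trans (List.drop_suffix _ _))
    have hpre : X ++ X <+: X ++ (X ++ t) := ⟨t, by simp⟩
    exact hW.1 X hX (hpre.isInfix.trans hXt.isInfix)
  have hbl : b < s.length + 2 * ℓ := by
    by_contra hcon
    push_neg at hcon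
    -- s ++ X ++ X is a prefix of W.take b
    have hpre : s ++ X ++ X <+: W' := ⟨t, by simpa [List.append_assoc] using hst⟩
    have htk : W'.take b = W.take b := by
      rw [hW', show W.take b ++ c :: W.drop b = (W.take b) ++ (c :: W.drop b) by simp]
      rw [List.take_append, List.take_take]
      simp [List.length_take, Nat.min_eq_left hb]
    have hpre2 : s ++ X ++ X <+: W.take b := by
      rw [← htk, List.prefix_take_iff]
      refine ⟨hpre, by simp; omega⟩
    have hsuf : X ++ X <:+ s ++ X ++ X := ⟨s, by simp⟩
    exact hW.1 X hX (hsuf.isInfix.trans (hpre2.trans (List.take_prefix b W)).isInfix)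
  -- getElem facts
  have hWb : W'[b]? = some c := by
    rw [hW']
    rw [List.getElem?_append_right (by simp)]
    simp [List.length_take, Nat.min_eq_left hb]
  have hWlt : ∀ i < b, W'[i]? = W[i]? := by
    intro i hi
    rw [hW', List.getElem?_append_left (by simp [List.length_take]; omega),
      List.getElem?_take_of_lt (by omega)]
  have hWgt : ∀ i, b ≤ i → W'[i + 1]? = W[i]? := by
    intro i hi
    rw [hW', show W.take b ++ c :: W.drop b = (W.take b ++ [c]) ++ W.drop b by simp]
    rw [List.getElem?_append_right (by simp [List.length_take]; omega)]
    rw [List.getElem?_drop]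
    congr 1
    simp [List.length_take]; omega
  -- rule out ℓ = 1
  have hℓ2 : 2 ≤ ℓ := by
    rcases Nat.lt_or_ge ℓ 2 with hcon | h
    · exfalso
      have hℓeq : ℓ = 1 := by omega
      obtain ⟨x, hx⟩ := List.length_eq_one_iff.mp (show X.length = 1 by omega)
      subst hx
      have e1 : W'[s.length]? = some x := by
        rw [show s.length = s.length + 0 from rfl, ← List.getElem?_drop, hdropS]; simp
      have e2 : W'[s.length + 1]? = some x := by
        rw [← List.getElem?_drop, hdropS]; simp
      rcases Nat.eq_or_lt_of_le hsb with heq | hlt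
      · -- b = s.length : x = c and W[b]? = some c
        have hxc : x = c := by rw [heq, hWb] at e1; exact (Option.some_inj.mp e1).symm
        have hb1 : b + 1 ≤ W.length := by omega
        have e2' : W'[b + 1]? = some c := by rw [← heq, e2, hxc]
        exact h2 hb1 ((hWgt b le_rfl).symm.trans e2')
      · -- b = s.length + 1
        have hbeq : b = s.length + 1 := by omega
        have hxc : x = c := by
          rw [← hbeq] at e2; rw [hWb] at e2; exact (Option.some_inj.mp e2).symm
        refine h1 (by omega) ?_
        rw [show b - 1 = s.length by omega, ← hWlt s.length (by omega), e1, hxc]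
    · exact h
  refine ⟨s.length + 1, ℓ, by omega, by omega, hℓ2, by omega, hℓ1, by omega, hb, by omega, ?_⟩
  -- factor equalities
  have f1 : factor W' (s.length + 1) (s.length + 1 + ℓ) = X := by
    unfold factor
    rw [show s.length + 1 - 1 = s.length by omega,
      show s.length + 1 + ℓ - (s.length + 1) = X.length by omega, hdropS,
      List.take_left]
  have f2 : factor W' (s.length + 1 + ℓ) (s.length + 1 + 2 * ℓ) = X := by
    unfold factor
    rw [show s.length + 1 + ℓ - 1 = s.length + ℓ by omega, ← List.drop_drop, hdropS,
      show s.length + 1 + 2 * ℓ - (s.length + 1 + ℓ) = X.length by omega]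
    rw [show (ℓ : ℕ) = X.length from rfl, List.drop_left, List.take_left]
  rw [f1, f2]

open Classical in
noncomputable def scPair {α : Type*} (W : List α) (b : ℕ) (c : α) : ℕ × ℕ :=
  if h : ∃ a ℓ : ℕ, 1 ≤ a ∧ a ≤ b + 1 ∧ 2 ≤ ℓ ∧ SquareCompleting W a ℓ b c
  then (h.choose, h.choose_spec.choose) else (0, 0)

lemma scPair_spec {α : Type*} {W : List α} {b : ℕ} {c : α}
    (h : ∃ a ℓ : ℕ, 1 ≤ a ∧ a ≤ b + 1 ∧ 2 ≤ ℓ ∧ SquareCompleting W a ℓ b c) :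
    2 ≤ (scPair W b c).2 ∧ SquareCompleting W (scPair W b c).1 (scPair W b c).2 b c := by
  rw [scPair]
  rw [dif_pos h]
  exact ⟨h.choose_spec.choose_spec.2.2.1, h.choose_spec.choose_spec.2.2.2⟩

/-- In an extremal square-free word `W` of length `n`, for every gap `b` (`0 ≤ b ≤ n`) and
every letter `c` distinct from the letters of `W` adjacent to gap `b`, there is a
square-completing quadruple `(a, ℓ, b, c)` with `ℓ ≥ 2`.  Consequently, if the alphabet has
`k` letters, there is a family of square-completing quadruples with `ℓ ≥ 2`, no two sharing
the same pair `(b, c)`, of size at least `(k - 2)(n + 1)`. -/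
theorem extremal_many_square_completing {α : Type*} [Fintype α] (W : List α) (n : ℕ)
    (hn : W.length = n) (hW : ExtremalSquareFree W) :
    (∀ b ≤ n, ∀ c : α,
      (1 ≤ b → W[b - 1]? ≠ some c) → (b + 1 ≤ n → W[b]? ≠ some c) →
      ∃ a ℓ : ℕ, 1 ≤ a ∧ a ≤ b + 1 ∧ 2 ≤ ℓ ∧ SquareCompleting W a ℓ b c) ∧
    ∃ A : Finset (ℕ × ℕ × ℕ × α),
      (∀ q ∈ A, SquareCompleting W q.1 q.2.1 q.2.2.1 q.2.2.2 ∧ 2 ≤ q.2.1) ∧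
      (∀ q ∈ A, ∀ q' ∈ A, q.2.2.1 = q'.2.2.1 → q.2.2.2 = q'.2.2.2 → q = q') ∧
      (Fintype.card α - 2) * (n + 1) ≤ A.card := by
  classical
  subst hn
  have hkey := key W hW
  refine ⟨fun b hb c h1 h2 => hkey b hb c h1 h2, ?_⟩
  set n := W.length with hn
  set Good : ℕ → α → Prop := fun b c =>
    (1 ≤ b → W[b - 1]? ≠ some c) ∧ (b + 1 ≤ n → W[b]? ≠ some c) with hGood
  set T : Finset (ℕ × α) := (Finset.range (n + 1)).biUnion
    (fun b => (Finset.univ.filter fun c => Good b c).image fun c => (b, c)) with hT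
  have hTmem : ∀ p : ℕ × α, p ∈ T → p.1 ≤ n ∧ Good p.1 p.2 := by
    intro p hp
    rw [hT, Finset.mem_biUnion] at hp
    obtain ⟨b, hb, hp⟩ := hp
    rw [Finset.mem_image] at hp
    obtain ⟨c, hc, rfl⟩ := hp
    exact ⟨by simpa using Nat.lt_succ_iff.mp (Finset.mem_range.mp hb),
      (Finset.mem_filter.mp hc).2⟩
  have hTcard : (Fintype.card α - 2) * (n + 1) ≤ T.card := by
    rw [hT, Finset.card_biUnion]
    · have hper : ∀ b ∈ Finset.range (n + 1),
          Fintype.card α - 2 ≤ ((Finset.univ.filter fun c => Good b c).image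
            fun c => (b, c)).card := by
        intro b _
        rw [Finset.card_image_of_injective _ (fun x y h => by simpa using h)]
        have hsub : (Finset.univ.filter fun c => ¬ Good b c) ⊆
            (W[b - 1]?).toFinset ∪ (W[b]?).toFinset := by
          intro c hc
          have hc2 := (Finset.mem_filter.mp hc).2
          rw [hGood] at hc2
          by_cases hA : W[b - 1]? = some c
          · exact Finset.mem_union_left _ (by simp [hA])
          · by_cases hB : W[b]? = some c
            · exact Finset.mem_union_right _ (by simp [hB])
            · exact absurd ⟨fun _ => hA, fun _ => hB⟩ hc2
        have hb2 : (Finset.univ.filter fun c => ¬ Good b c).card ≤ 2 := by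
          refine (Finset.card_le_card hsub).trans ?_
          refine (Finset.card_union_le _ _).trans ?_
          have o1 : ∀ o : Option α, o.toFinset.card ≤ 1 := by
            intro o; cases o <;> simp
          have := o1 (W[b - 1]?)
          have := o1 (W[b]?)
          omega
        have := Finset.card_filter_add_card_filter_not
          (s := (Finset.univ : Finset α)) (p := fun c => Good b c)
        rw [Finset.card_univ] at this
        omega
      calc (Fintype.card α - 2) * (n + 1)
          = ∑ _b ∈ Finset.range (n + 1), (Fintype.card α - 2) := by
            rw [Finset.sum_const, Finset.card_range, smul_eq_mul, mul_comm]
        _ ≤ _ := Finset.sum_le_sum hper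
    · intro b _ b' _ hbb'
      simp only [Finset.disjoint_left, Finset.mem_image]
      rintro p ⟨c, _, rfl⟩ ⟨c', _, hc'⟩
      exact hbb' (by simpa using (congrArg Prod.fst hc').symm)
  set g : ℕ × α → ℕ × ℕ × ℕ × α :=
    fun p => ((scPair W p.1 p.2).1, (scPair W p.1 p.2).2, p.1, p.2) with hg
  have hginj : Function.Injective g := by
    intro p q h
    rw [hg] at h
    have h1 : p.1 = q.1 := congrArg (fun x => x.2.2.1) h
    have h2 : p.2 = q.2 := congrArg (fun x => x.2.2.2) h
    exact Prod.ext h1 h2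
  refine ⟨T.image g, ?_, ?_, ?_⟩
  · intro q hq
    obtain ⟨p, hp, rfl⟩ := Finset.mem_image.mp hq
    obtain ⟨hpn, hpg⟩ := hTmem p hp
    have hex := hkey p.1 hpn p.2 hpg.1 hpg.2
    have := scPair_spec hex
    exact ⟨this.2, this.1⟩
  · intro q hq q' hq' hb hc
    obtain ⟨p, _, rfl⟩ := Finset.mem_image.mp hq
    obtain ⟨p', _, rfl⟩ := Finset.mem_image.mp hq'
    simp only [hg] at hb hc ⊢
    rw [show p = p' from Prod.ext hb hc]
  · rw [Finset.card_image_of_injective _ hginj]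
    exact hTcard
end

section
/- Let W be a square-free word of length n over a finite alphabet Σ. Then the number of pairs (b, c), where b is a gap of W (0 ≤ b ≤ n) and c ∈ Σ is a letter, such that the word W +_b c obtained by inserting c at gap b contains a square, is less than 16.7(n + 1). -/
namespace CBI

open List Finset

variable {α : Type*}

lemma insertIdx_eq (w : List α) (b : ℕ) (c : α) (hb : b ≤ w.length) :
    w.insertIdx b c = w.take b ++ c :: w.drop b := by
  induction w generalizing b with
  | nil => simp at hb; simp [hb]
  | cons x xs ih =>
    cases b with
    | zero => simp
    | succ b => simp only [List.length_cons, Nat.add_le_add_iff_right] at hb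
                simp [List.insertIdx_succ_cons, ih b hb]

/-- positions equal at distance `m` (with both indices in range). -/
def Ep (w : List α) (m i : ℕ) : Prop := i + m < w.length ∧ w[i]? = w[i + m]?

lemma squareFree_reverse {w : List α} (hW : SquareFree w) : SquareFree w.reverse := by
  intro X hX hinf
  apply hW X.reverse (by simpa using hX)
  have h1 : (X ++ X).reverse <:+: w.reverse.reverse := List.reverse_infix.mpr hinf
  rw [List.reverse_reverse] at h1
  simpa [List.reverse_append] using h1

lemma not_squareFree_of_period (w : List α) (x p : ℕ) (hp : 0 < p)
    (hle : x + (p + p) ≤ w.length)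
    (h : ∀ i, x ≤ i → i < x + p → w[i]? = w[i + p]?) : ¬ SquareFree w := by
  intro hW
  set X := (w.drop x).take p with hX
  have hXlen : X.length = p := by simp [hX]; omega
  have hne : X ≠ [] := by
    intro h0; rw [h0] at hXlen; simp at hXlen; omega
  have h2 : (w.drop x).take (p + p) = X ++ X := by
    apply List.ext_getElem?
    intro i
    rw [List.getElem?_take]
    rcases lt_or_ge i p with hi | hi
    · rw [List.getElem?_append_left (by omega), if_pos (by omega), hX, List.getElem?_take,
        if_pos hi]
    · rcases lt_or_ge i (p + p) with hi2 | hi2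
      · rw [if_pos hi2, List.getElem?_append_right (by omega), hX, List.getElem?_take,
          hXlen, if_pos (by omega)]
        rw [List.getElem?_drop, List.getElem?_drop]
        have := h (x + (i - p)) (by omega) (by omega)
        rw [this]
        congr 1
        omega
      · rw [if_neg (by omega)]
        symm
        rw [List.getElem?_eq_none_iff]
        simp [hXlen]; omega
  have h3 : X ++ X <:+: w := by
    rw [← h2]
    exact ((w.drop x).take_prefix (p + p)).isInfix.trans (w.drop_suffix x).isInfix
  exact hW X hne h3

lemma Ep.trans_sub {w : List α} {m m' i : ℕ} (h : Ep w m i) (h' : Ep w m' i) (hmm : m < m') :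
    Ep w (m' - m) (i + m) := by
  obtain ⟨h1, h2⟩ := h; obtain ⟨h1', h2'⟩ := h'
  refine ⟨by omega, ?_⟩
  have he : i + m + (m' - m) = i + m' := by omega
  rw [he, ← h2, ← h2']

lemma cap {w : List α} (hW : SquareFree w) {δ x : ℕ} (hδ : 0 < δ)
    (h : ∀ i, x ≤ i → i < x + δ → Ep w δ i) : False := by
  have hle : x + (δ + δ) ≤ w.length := by
    have := (h (x + δ - 1) (by omega) (by omega)).1; omega
  exact not_squareFree_of_period w x δ hδ hle (fun i h1 h2 => (h i h1 h2).2) hW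

lemma both_Ep {w : List α} (hW : SquareFree w) {m m' i : ℕ} (h : Ep w m i) (h' : Ep w m' i)
    (hmm : m < m') (hd : m' - m = 1) : False := by
  have h1 := h.trans_sub h' hmm
  rw [hd] at h1
  exact cap hW (δ := 1) (x := i + m) one_pos (by
    intro j hj1 hj2
    have : j = i + m := by omega
    rwa [this])

lemma inter_cap {w : List α} (hW : SquareFree w) {m m' x y : ℕ} (hmm : m < m')
    (h : ∀ i, x ≤ i → i < y → Ep w m i ∧ Ep w m' i) : y - x ≤ m' - m - 1 := by
  by_contra hc
  push_neg at hc
  apply cap hW (δ := m' - m) (x := x + m) (by omega)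
  intro j hj1 hj2
  have h0 := h (j - m) (by omega) (by omega)
  have h3 := h0.1.trans_sub h0.2 hmm
  have : j - m + m = j := by omega
  rwa [this] at h3

/-- a configuration at gap `b`, level `k`. -/
def Conf (w : List α) (k b a : ℕ) : Prop :=
  a ≤ b ∧ a + 1 ≤ k ∧ (∀ i, b - a ≤ i → i < b → Ep w k i) ∧
    (∀ i, b ≤ i → i < b + (k - a) → Ep w (k + 1) i)

open scoped Classical in
/-- gaps carrying a level-`k` configuration. -/
noncomputable def BB (w : List α) (k : ℕ) : Finset ℕ :=
  (Finset.range (w.length + 1)).filter (fun b => ∃ a, Conf w k b a)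

def PA (w : List α) (k b a : ℕ) : Prop := a ≤ b ∧ ∀ i, b - a ≤ i → i < b → Ep w k i
def PG (w : List α) (k b g : ℕ) : Prop := ∀ i, b ≤ i → i < b + g → Ep w (k + 1) i

open scoped Classical in
noncomputable def astar (w : List α) (k b : ℕ) : ℕ := Nat.findGreatest (PA w k b) (k - 1)
open scoped Classical in
noncomputable def gstar (w : List α) (k b : ℕ) : ℕ := Nat.findGreatest (PG w k b) k

noncomputable def Iv (w : List α) (k b : ℕ) : Finset ℕ :=
  Finset.Ico (b - astar w k b) (b + gstar w k b)

lemma mem_BB_iff {w : List α} {k b : ℕ} :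
    b ∈ BB w k ↔ b ≤ w.length ∧ ∃ a, Conf w k b a := by
  classical
  simp [BB, Nat.lt_succ_iff]

section Star

variable {w : List α} {k b : ℕ}

open scoped Classical

lemma star_PA (hb : b ∈ BB w k) : PA w k b (astar w k b) := by
  apply Nat.findGreatest_spec (m := 0) (Nat.zero_le _)
  exact ⟨Nat.zero_le _, fun i h1 h2 => absurd (lt_of_le_of_lt h1 h2) (lt_irrefl _)⟩

lemma star_PG (hb : b ∈ BB w k) : PG w k b (gstar w k b) := by
  apply Nat.findGreatest_spec (m := 0) (Nat.zero_le _)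
  exact fun i h1 h2 => absurd (lt_of_le_of_lt h1 h2) (by omega)

lemma star_facts (hb : b ∈ BB w k) :
    1 ≤ k ∧ astar w k b ≤ k - 1 ∧ gstar w k b ≤ k ∧ k ≤ astar w k b + gstar w k b ∧
      astar w k b ≤ b := by
  obtain ⟨hble, a, ha⟩ := mem_BB_iff.mp hb
  obtain ⟨ha1, ha2, ha3, ha4⟩ := ha
  have h1 : 1 ≤ k := by omega
  have hA : a ≤ astar w k b := Nat.le_findGreatest (by omega) ⟨ha1, ha3⟩
  have hG : k - a ≤ gstar w k b := Nat.le_findGreatest (by omega) ha4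
  exact ⟨h1, Nat.findGreatest_le _, Nat.findGreatest_le _, by omega, (star_PA hb).1⟩

lemma star_A (hb : b ∈ BB w k) {i : ℕ} (h1 : b - astar w k b ≤ i) (h2 : i < b) : Ep w k i :=
  (star_PA hb).2 i h1 h2

lemma star_G (hb : b ∈ BB w k) {i : ℕ} (h1 : b ≤ i) (h2 : i < b + gstar w k b) :
    Ep w (k + 1) i := star_PG hb i h1 h2

lemma Iv_card (hb : b ∈ BB w k) : (Iv w k b).card = astar w k b + gstar w k b := by
  have h5 := (star_facts hb).2.2.2.2
  rw [Iv, Nat.card_Ico]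
  omega

lemma Iv_lower (hb : b ∈ BB w k) : k ≤ (Iv w k b).card := by
  rw [Iv_card hb]; exact (star_facts hb).2.2.2.1

lemma gstar_pos (hb : b ∈ BB w k) : 1 ≤ gstar w k b := by
  have := star_facts hb; omega

lemma Iv_subset (hb : b ∈ BB w k) : Iv w k b ⊆ Finset.range w.length := by
  intro i hi
  rw [Iv, Finset.mem_Ico] at hi
  rw [Finset.mem_range]
  have hg := gstar_pos hb
  have := (star_G hb (i := b + gstar w k b - 1) (by omega) (by omega)).1
  omega

lemma mem_Iv_Ep (hb : b ∈ BB w k) {i : ℕ} (hi : i ∈ Iv w k b) :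
    (i < b ∧ Ep w k i) ∨ (b ≤ i ∧ Ep w (k + 1) i) := by
  rw [Iv, Finset.mem_Ico] at hi
  rcases lt_or_ge i b with h | h
  · exact Or.inl ⟨h, star_A hb hi.1 h⟩
  · exact Or.inr ⟨h, star_G hb h hi.2⟩

end Star

lemma Iv_disjoint {w : List α} (hW : SquareFree w) {k b b' : ℕ} (hb : b ∈ BB w k)
    (hb' : b' ∈ BB w k) (hlt : b < b') : Disjoint (Iv w k b) (Iv w k b') := by
  classical
  rw [Finset.disjoint_left]
  intro i hi hi'
  have hi0 := hi; have hi0' := hi'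
  rw [Iv, Finset.mem_Ico] at hi0 hi0'
  have hg := gstar_pos hb
  have hg' := gstar_pos hb'
  rcases lt_or_ge i b' with hc1 | hc1
  · -- i in A'-part
    have hEk_i : Ep w k i := star_A hb' hi0'.1 hc1
    rcases lt_or_ge i b with hc2 | hc2
    · -- b itself lies in A'-part
      have hEk_b : Ep w k b := star_A hb' (by omega) (by omega)
      have hEk1_b : Ep w (k + 1) b := star_G hb (le_refl _) (by omega)
      exact both_Ep hW hEk_b hEk1_b (by omega) (by omega)
    · have hEk1_i : Ep w (k + 1) i := star_G hb hc2 hi0.2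
      exact both_Ep hW hEk_i hEk1_i (by omega) (by omega)
  · -- i in C'-part; note b ≤ b' - 1 < b + gstar
    have hEk1 : Ep w (k + 1) (b' - 1) := star_G hb (by omega) (by omega)
    rcases Nat.eq_zero_or_pos (astar w k b') with ha' | ha'
    · -- astar b' = 0, hence gstar b' = k
      have hgk : gstar w k b' = k := by have := star_facts hb'; omega
      apply cap hW (δ := k + 1) (x := b' - 1) (by omega)
      intro j hj1 hj2
      rcases lt_or_ge j b' with hj3 | hj3
      · have : j = b' - 1 := by omega
        rwa [this]
      · exact star_G hb' hj3 (by omega)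
    · have hEk : Ep w k (b' - 1) := star_A hb' (by omega) (by omega)
      exact both_Ep hW hEk hEk1 (by omega) (by omega)

lemma piece_cap {w : List α} (hW : SquareFree w) {m m' x y : ℕ} (hmm : m < m')
    (hA : ∀ i, x ≤ i → i < y → Ep w m i) (hB : ∀ i, x ≤ i → i < y → Ep w m' i) :
    (Finset.Ico x y).card ≤ m' - m - 1 := by
  rw [Nat.card_Ico]
  exact inter_cap hW hmm (fun i h1 h2 => ⟨hA i h1 h2, hB i h1 h2⟩)

/-- cross-level overlap cap: configs at levels `k < k'` with `k' - k ≥ 2` have interval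
overlap at most `4(k'-k) - 4`. -/
lemma overlap_cap {w : List α} (hW : SquareFree w) {k k' b b' : ℕ} (hb : b ∈ BB w k)
    (hb' : b' ∈ BB w k') (h2 : k + 2 ≤ k') :
    (Iv w k b ∩ Iv w k' b').card ≤ 4 * (k' - k) - 4 := by
  classical
  set a := astar w k b with ha
  set g := gstar w k b with hg
  set a' := astar w k' b' with ha'
  set g' := gstar w k' b' with hg'
  have hfact := star_facts hb
  have hfact' := star_facts hb'
  have hsplit : Iv w k b ∩ Iv w k' b' ⊆
      ((Finset.Ico (max (b-a) (b'-a')) (min b b')) ∪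
       (Finset.Ico (max (b-a) b') (min b (b'+g')))) ∪
      ((Finset.Ico (max b (b'-a')) (min (b+g) b')) ∪
       (Finset.Ico (max b b') (min (b+g) (b'+g')))) := by
    intro i hi
    simp only [Iv, Finset.mem_inter, Finset.mem_Ico] at hi
    simp only [Finset.mem_union, Finset.mem_Ico, le_max_iff, max_le_iff, lt_min_iff,
      min_lt_iff, sup_le_iff, le_sup_iff]
    rcases lt_or_ge i b with h1 | h1 <;> rcases lt_or_ge i b' with h1' | h1'
    · exact Or.inl (Or.inl ⟨⟨by omega, by omega⟩, by omega, by omega⟩)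
    · exact Or.inl (Or.inr ⟨⟨by omega, by omega⟩, by omega, by omega⟩)
    · exact Or.inr (Or.inl ⟨⟨by omega, by omega⟩, by omega, by omega⟩)
    · exact Or.inr (Or.inr ⟨⟨by omega, by omega⟩, by omega, by omega⟩)
  have c1 : (Finset.Ico (max (b-a) (b'-a')) (min b b')).card ≤ (k' - k) - 1 :=
    piece_cap hW (show k < k' by omega)
      (fun i hi1 hi2 => star_A hb (by omega) (by omega))
      (fun i hi1 hi2 => star_A hb' (by omega) (by omega))
  have c2 : (Finset.Ico (max (b-a) b') (min b (b'+g'))).card ≤ (k' + 1 - k) - 1 :=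
    piece_cap hW (show k < k' + 1 by omega)
      (fun i hi1 hi2 => star_A hb (by omega) (by omega))
      (fun i hi1 hi2 => star_G hb' (by omega) (by omega))
  have c3 : (Finset.Ico (max b (b'-a')) (min (b+g) b')).card ≤ (k' - (k+1)) - 1 :=
    piece_cap hW (show k + 1 < k' by omega)
      (fun i hi1 hi2 => star_G hb (by omega) (by omega))
      (fun i hi1 hi2 => star_A hb' (by omega) (by omega))
  have c4 : (Finset.Ico (max b b') (min (b+g) (b'+g'))).card ≤ (k' + 1 - (k+1)) - 1 :=
    piece_cap hW (show k + 1 < k' + 1 by omega)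
      (fun i hi1 hi2 => star_G hb (by omega) (by omega))
      (fun i hi1 hi2 => star_G hb' (by omega) (by omega))
  have hcard := Finset.card_le_card hsplit
  have t0 := Finset.card_union_le
    ((Finset.Ico (max (b-a) (b'-a')) (min b b')) ∪
       (Finset.Ico (max (b-a) b') (min b (b'+g'))))
    ((Finset.Ico (max b (b'-a')) (min (b+g) b')) ∪
       (Finset.Ico (max b b') (min (b+g) (b'+g'))))
  have t1 := Finset.card_union_le (Finset.Ico (max (b-a) (b'-a')) (min b b'))
    (Finset.Ico (max (b-a) b') (min b (b'+g')))
  have t2 := Finset.card_union_le (Finset.Ico (max b (b'-a')) (min (b+g) b'))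
    (Finset.Ico (max b b') (min (b+g) (b'+g')))
  omega

/-- two same-parity same-side configs of one dyadic class covering a common point
have far-apart levels. -/
lemma level_gap {w : List α} (hW : SquareFree w) {M k k' b b' i : ℕ} (hM8 : M % 8 = 0)
    (hMk : M ≤ k) (hkk : k < k') (hk2M : k' < 2 * M)
    (hb : b ∈ BB w k) (hb' : b' ∈ BB w k') (hi : i ∈ Iv w k b) (hi' : i ∈ Iv w k' b')
    (hpar : k % 2 = k' % 2)
    (hside : (M ≤ 2 * (i - (b - astar w k b))) ↔ (M ≤ 2 * (i - (b' - astar w k' b')))) :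
    M / 8 + 2 ≤ k' - k := by
  classical
  have hfact := star_facts hb
  have hfact' := star_facts hb'
  have hiIco := hi; have hiIco' := hi'
  rw [Iv, Finset.mem_Ico] at hiIco hiIco'
  set a := astar w k b with ha;  set g := gstar w k b with hg
  set a' := astar w k' b' with ha';  set g' := gstar w k' b' with hg'
  -- the overlap contains a long interval around i
  have hlarge : M / 2 + 1 ≤ (Iv w k b ∩ Iv w k' b').card := by
    rcases iff_iff_and_or_not_and_not.mp hside with hss | hss
    · -- both left-heavy
      set m := min (i - (b - a)) (i - (b' - a')) with hm
      have hsub : Finset.Ico (i - m) (i + 1) ⊆ Iv w k b ∩ Iv w k' b' := by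
        intro j hj
        rw [Finset.mem_Ico] at hj
        simp only [Iv, Finset.mem_inter, Finset.mem_Ico]
        omega
      have := Finset.card_le_card hsub
      rw [Nat.card_Ico] at this
      omega
    · -- both right-heavy
      set r := min (b + g - i) (b' + g' - i) with hr
      have hsub : Finset.Ico i (i + r) ⊆ Iv w k b ∩ Iv w k' b' := by
        intro j hj
        rw [Finset.mem_Ico] at hj
        simp only [Iv, Finset.mem_inter, Finset.mem_Ico]
        omega
      have := Finset.card_le_card hsub
      rw [Nat.card_Ico] at this
      have hc := Iv_card hb
      have hc' := Iv_card hb'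
      rw [← ha, ← hg] at hc; rw [← ha', ← hg'] at hc'
      omega
  have hsmall := overlap_cap hW hb hb' (by omega)
  omega

open scoped Classical in
/-- at most 32 configurations of a dyadic class cover any fixed position. -/
lemma pointwise_bound {w : List α} (hW : SquareFree w) {M : ℕ} (hM8 : M % 8 = 0)
    (hM : 8 ≤ M) (i : ℕ) :
    (((Finset.Ico M (2*M)) ×ˢ Finset.range (w.length+1)).filter
      (fun q => q.2 ∈ BB w q.1 ∧ i ∈ Iv w q.1 q.2)).card ≤ 32 := by
  classical
  set D := M / 8 + 2 with hD
  have hcard : ((Finset.range 2) ×ˢ ((Finset.range 2) ×ˢ (Finset.range 8))).card = 32 := by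
    simp
  rw [← hcard]
  apply Finset.card_le_card_of_injOn
    (fun q => (q.1 % 2, if M ≤ 2 * (i - (q.2 - astar w q.1 q.2)) then 1 else 0, (q.1 - M) / D))
  · intro q hq
    simp only [Finset.mem_coe, Finset.mem_filter, Finset.mem_product, Finset.mem_Ico, Finset.mem_range] at hq ⊢
    refine ⟨by omega, by split <;> omega, ?_⟩
    have h1 : q.1 - M < 8 * D := by omega
    exact Nat.div_lt_of_lt_mul (by omega)
  · intro q hq q' hq' heq
    simp only [Finset.mem_coe, Finset.mem_filter, Finset.mem_product, Finset.mem_Ico,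
      Finset.mem_range] at hq hq'
    simp only [Prod.mk.injEq] at heq
    obtain ⟨⟨⟨hqM, hq2M⟩, _⟩, hqB, hqi⟩ := hq
    obtain ⟨⟨⟨hqM', hq2M'⟩, _⟩, hqB', hqi'⟩ := hq'
    have hside : (M ≤ 2 * (i - (q.2 - astar w q.1 q.2))) ↔
        (M ≤ 2 * (i - (q'.2 - astar w q'.1 q'.2))) := by
      rcases heq.2.1 with h
      constructor <;> intro hx <;> by_contra hy <;> simp [hx, hy] at h
    rcases lt_trichotomy q.1 q'.1 with hlt | heq1 | hlt
    · exfalso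
      have := level_gap hW hM8 hqM hlt hq2M' hqB hqB' hqi hqi' (by omega) hside
      have hdiv : (q.1 - M) / D < (q'.1 - M) / D := by
        have h2 : (q.1 - M) + D ≤ q'.1 - M := by omega
        calc (q.1 - M) / D < ((q.1 - M) + D) / D := by
              rw [Nat.add_div_right _ (by omega)]; omega
          _ ≤ (q'.1 - M) / D := Nat.div_le_div_right h2
      omega
    · -- same level: same b by interval disjointness
      have hb2 : q.2 = q'.2 := by
        by_contra hne
        rcases lt_or_gt_of_ne hne with hlt2 | hlt2
        · have := Iv_disjoint hW hqB (heq1 ▸ hqB') hlt2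
          rw [Finset.disjoint_left] at this
          exact this hqi (heq1 ▸ hqi')
        · have := Iv_disjoint hW (heq1 ▸ hqB') hqB hlt2
          rw [Finset.disjoint_left] at this
          exact this (heq1 ▸ hqi') hqi
      exact Prod.ext heq1 hb2
    · exfalso
      have := level_gap hW hM8 hqM' hlt hq2M hqB' hqB hqi' hqi (by omega) hside.symm
      have hdiv : (q'.1 - M) / D < (q.1 - M) / D := by
        have h2 : (q'.1 - M) + D ≤ q.1 - M := by omega
        calc (q'.1 - M) / D < ((q'.1 - M) + D) / D := by
              rw [Nat.add_div_right _ (by omega)]; omega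
          _ ≤ (q.1 - M) / D := Nat.div_le_div_right h2
      omega

lemma level_sum {w : List α} (hW : SquareFree w) (k : ℕ) :
    k * (BB w k).card ≤ w.length := by
  classical
  have h1 : ((BB w k).biUnion (Iv w k)).card = ∑ b ∈ BB w k, (Iv w k b).card := by
    apply Finset.card_biUnion
    intro b hb b' hb' hne
    rcases lt_or_gt_of_ne hne with h | h
    · exact Iv_disjoint hW hb hb' h
    · exact (Iv_disjoint hW hb' hb h).symm
  have h2 : (BB w k).biUnion (Iv w k) ⊆ Finset.range w.length := by
    intro i hi; rw [Finset.mem_biUnion] at hi; obtain ⟨b, hb, hib⟩ := hi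
    exact Iv_subset hb hib
  calc k * (BB w k).card = ∑ _b ∈ BB w k, k := by
        rw [Finset.sum_const, smul_eq_mul, mul_comm]
    _ ≤ ∑ b ∈ BB w k, (Iv w k b).card := Finset.sum_le_sum (fun b hb => Iv_lower hb)
    _ = ((BB w k).biUnion (Iv w k)).card := h1.symm
    _ ≤ (Finset.range w.length).card := Finset.card_le_card h2
    _ = w.length := Finset.card_range _

lemma BB_subset_range {w : List α} (k : ℕ) : BB w k ⊆ Finset.range (w.length + 1) := by
  intro b hb; rw [mem_BB_iff] at hb; rw [Finset.mem_range]; omega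

open scoped Classical in
lemma class_sum {w : List α} (hW : SquareFree w) {M : ℕ} (hM8 : M % 8 = 0) (hM : 8 ≤ M) :
    M * (∑ k ∈ Finset.Ico M (2*M), (BB w k).card) ≤ 32 * w.length := by
  classical
  set P := ((Finset.Ico M (2*M)) ×ˢ Finset.range (w.length+1)).filter
      (fun q => q.2 ∈ BB w q.1) with hP
  have hsum_eq : ∀ k, ∑ b ∈ Finset.range (w.length+1),
      (if b ∈ BB w k then (Iv w k b).card else 0) = ∑ b ∈ BB w k, (Iv w k b).card := by
    intro k
    rw [← Finset.sum_filter]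
    congr 1
    rw [Finset.filter_mem_eq_inter]
    exact Finset.inter_eq_right.mpr (BB_subset_range k)
  have step1 : M * (∑ k ∈ Finset.Ico M (2*M), (BB w k).card) ≤
      ∑ q ∈ P, (Iv w q.1 q.2).card := by
    rw [hP, Finset.sum_filter, Finset.sum_product, Finset.mul_sum]
    apply Finset.sum_le_sum
    intro k hk
    rw [Finset.mem_Ico] at hk
    rw [hsum_eq k]
    calc M * (BB w k).card = ∑ _b ∈ BB w k, M := by
          rw [Finset.sum_const, smul_eq_mul, mul_comm]
      _ ≤ ∑ b ∈ BB w k, (Iv w k b).card :=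
          Finset.sum_le_sum (fun b hb => le_trans (by omega : M ≤ k) (Iv_lower hb))
  have step2 : ∑ q ∈ P, (Iv w q.1 q.2).card ≤ 32 * w.length := by
    have hIv : ∀ q ∈ P, (Iv w q.1 q.2).card =
        ∑ i ∈ Finset.range w.length, (if i ∈ Iv w q.1 q.2 then 1 else 0) := by
      intro q hq
      rw [Finset.mem_filter] at hq
      rw [← Finset.sum_filter, Finset.sum_const, smul_eq_mul, mul_one]
      congr 1
      rw [Finset.filter_mem_eq_inter]
      exact (Finset.inter_eq_right.mpr (Iv_subset hq.2)).symm
  -- note: goal of congr may be reversed; handled by symm above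
    rw [Finset.sum_congr rfl hIv, Finset.sum_comm]
    have hpt : ∀ i, ∑ q ∈ P, (if i ∈ Iv w q.1 q.2 then 1 else 0) ≤ 32 := by
      intro i
      rw [← Finset.card_filter]
      rw [hP, Finset.filter_filter]
      exact pointwise_bound hW hM8 hM i
    calc ∑ i ∈ Finset.range w.length, ∑ q ∈ P, (if i ∈ Iv w q.1 q.2 then 1 else 0)
        ≤ ∑ _i ∈ Finset.range w.length, 32 := Finset.sum_le_sum (fun i _ => hpt i)
      _ = 32 * w.length := by rw [Finset.sum_const, Finset.card_range, smul_eq_mul, mul_comm]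
  exact le_trans step1 step2

lemma BB_card_real {w : List α} (hW : SquareFree w) {k : ℕ} (hk : 1 ≤ k) :
    ((BB w k).card : ℝ) ≤ (w.length : ℝ) / k := by
  have h := level_sum hW k
  rw [le_div_iff₀ (by positivity : (0:ℝ) < (k:ℝ))]
  calc ((BB w k).card : ℝ) * k = ((k * (BB w k).card : ℕ) : ℝ) := by push_cast; ring
    _ ≤ (w.length : ℝ) := by exact_mod_cast h

lemma class_sum_real {w : List α} (hW : SquareFree w) (j : ℕ) (hj : 3 ≤ j) :
    ∑ k ∈ Finset.Ico (2^j) (2^(j+1)), ((BB w k).card : ℝ) ≤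
      32 * (w.length : ℝ) / 2^j := by
  have hM8 : (2:ℕ)^j % 8 = 0 := by
    have h8 : (8:ℕ) ∣ 2^j := by
      have h3 : (2:ℕ)^3 ∣ 2^j := Nat.pow_dvd_pow 2 hj
      simpa using h3
    omega
  have hM : 8 ≤ 2^j := by
    calc (8:ℕ) = 2^3 := by norm_num
      _ ≤ 2^j := Nat.pow_le_pow_right (by norm_num) hj
  have h := class_sum hW (M := 2^j) hM8 hM
  have h2M : 2 * 2^j = 2^(j+1) := by rw [pow_succ]; ring
  rw [h2M] at h
  rw [le_div_iff₀ (by positivity : (0:ℝ) < (2:ℝ)^j)]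
  calc (∑ k ∈ Finset.Ico (2^j) (2^(j+1)), ((BB w k).card : ℝ)) * 2^j
      = ((2^j * ∑ k ∈ Finset.Ico (2^j) (2^(j+1)), (BB w k).card : ℕ) : ℝ) := by
        push_cast; ring
    _ ≤ ((32 * w.length : ℕ) : ℝ) := by exact_mod_cast h
    _ = 32 * (w.length : ℝ) := by push_cast; ring

lemma tail_bound {w : List α} (hW : SquareFree w) :
    (∑ k ∈ Finset.Icc 32 w.length, ((BB w k).card : ℝ)) ≤ 2 * w.length := by
  classical
  set n := w.length with hn
  have hsub : Finset.Icc 32 n ⊆ (Finset.Icc 5 n).biUnion (fun j => Finset.Ico (2^j) (2^(j+1))) := by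
    intro k hk
    rw [Finset.mem_Icc] at hk
    rw [Finset.mem_biUnion]
    refine ⟨Nat.log 2 k, ?_, ?_⟩
    · rw [Finset.mem_Icc]
      constructor
      · have : (2:ℕ)^5 ≤ k := by omega
        exact (Nat.le_log_iff_pow_le (by norm_num) (by omega)).mpr this
      · exact le_trans (Nat.log_le_self 2 k) hk.2
    · rw [Finset.mem_Ico]
      exact ⟨Nat.pow_log_le_self 2 (by omega), Nat.lt_pow_succ_log_self (by norm_num) k⟩
  have hdisj : ∀ j ∈ Finset.Icc 5 n, ∀ j' ∈ Finset.Icc 5 n, j ≠ j' →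
      Disjoint (Finset.Ico (2^j) (2^(j+1))) (Finset.Ico (2^j') (2^(j'+1))) := by
    intro j _ j' _ hne
    rw [Finset.disjoint_left]
    intro x hx hx'
    rw [Finset.mem_Ico] at hx hx'
    rcases lt_or_gt_of_ne hne with h | h
    · have : (2:ℕ)^(j+1) ≤ 2^j' := Nat.pow_le_pow_right (by norm_num) (by omega)
      omega
    · have : (2:ℕ)^(j'+1) ≤ 2^j := Nat.pow_le_pow_right (by norm_num) (by omega)
      omega
  calc (∑ k ∈ Finset.Icc 32 n, ((BB w k).card : ℝ))
      ≤ ∑ k ∈ (Finset.Icc 5 n).biUnion (fun j => Finset.Ico (2^j) (2^(j+1))),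
          ((BB w k).card : ℝ) :=
        Finset.sum_le_sum_of_subset_of_nonneg hsub (fun _ _ _ => by positivity)
    _ = ∑ j ∈ Finset.Icc 5 n, ∑ k ∈ Finset.Ico (2^j) (2^(j+1)), ((BB w k).card : ℝ) :=
        Finset.sum_biUnion hdisj
    _ ≤ ∑ j ∈ Finset.Icc 5 n, 32 * (n:ℝ) / 2^j :=
        Finset.sum_le_sum (fun j hj => class_sum_real hW j
          (by rw [Finset.mem_Icc] at hj; omega))
    _ ≤ 2 * n := by
        have hgeo : ∑ j ∈ Finset.Icc 5 n, ((2:ℝ)⁻¹)^j ≤ 1/16 := by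
          have h1 : Finset.Icc 5 n = Finset.Ico 5 (n+1) := by
            ext x; simp [Finset.mem_Icc, Finset.mem_Ico]
          rw [h1, Finset.sum_Ico_eq_sum_range]
          have h2 : ∀ i, ((2:ℝ)⁻¹)^(5+i) = (1/32) * (1/2)^i := by
            intro i; rw [pow_add]; norm_num
          rw [Finset.sum_congr rfl (fun i _ => h2 i), ← Finset.mul_sum]
          have := sum_geometric_two_le (n + 1 - 5)
          nlinarith [this]
        have heq : ∑ j ∈ Finset.Icc 5 n, 32 * (n:ℝ) / 2^j
            = 32 * (n:ℝ) * ∑ j ∈ Finset.Icc 5 n, ((2:ℝ)⁻¹)^j := by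
          rw [Finset.mul_sum]
          apply Finset.sum_congr rfl
          intro j _
          rw [inv_pow, div_eq_mul_inv]
        rw [heq]
        nlinarith [hgeo, Nat.cast_nonneg (α := ℝ) n]

lemma side_bound {w : List α} (hW : SquareFree w) :
    (∑ k ∈ Finset.Icc 1 w.length, ((BB w k).card : ℝ)) ≤ 6.03 * w.length := by
  classical
  set n := w.length with hn
  have hsplit : (∑ k ∈ Finset.Icc 1 n, ((BB w k).card : ℝ)) ≤
      (∑ k ∈ Finset.Icc 1 31, ((BB w k).card : ℝ)) +
      (∑ k ∈ Finset.Icc 32 n, ((BB w k).card : ℝ)) := by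
    rw [← Finset.sum_union (by
      rw [Finset.disjoint_left]; intro x hx hx'
      rw [Finset.mem_Icc] at hx hx'; omega)]
    apply Finset.sum_le_sum_of_subset_of_nonneg
    · intro x hx
      rw [Finset.mem_Icc] at hx
      rw [Finset.mem_union, Finset.mem_Icc, Finset.mem_Icc]
      omega
    · intro _ _ _; positivity
  have hH : ∑ k ∈ Finset.Icc (1:ℕ) 31, (1:ℝ)/(k:ℝ) ≤ 4.03 := by
    have h1 : Finset.Icc (1:ℕ) 31 = (Finset.range 32).erase 0 := by
      ext x; simp [Finset.mem_Icc, Finset.mem_range, Finset.mem_erase]; omega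
    rw [h1, Finset.sum_erase _ (by norm_num)]
    simp [Finset.sum_range_succ]
    norm_num
  have hhead : (∑ k ∈ Finset.Icc (1:ℕ) 31, ((BB w k).card : ℝ)) ≤ 4.03 * n := by
    calc (∑ k ∈ Finset.Icc (1:ℕ) 31, ((BB w k).card : ℝ))
        ≤ ∑ k ∈ Finset.Icc (1:ℕ) 31, (n:ℝ)/(k:ℝ) :=
          Finset.sum_le_sum (fun k hk => BB_card_real hW
            (by rw [Finset.mem_Icc] at hk; omega))
      _ = (n:ℝ) * ∑ k ∈ Finset.Icc (1:ℕ) 31, (1:ℝ)/(k:ℝ) := by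
          rw [Finset.mul_sum]
          exact Finset.sum_congr rfl (fun k _ => by ring)
      _ ≤ 4.03 * n := by nlinarith [hH, Nat.cast_nonneg (α := ℝ) n]
  have htail := tail_bound hW
  rw [← hn] at htail
  nlinarith [hhead, htail, hsplit]

section Structure

variable {w : List α} {b : ℕ} {c : α}

lemma take_len (hb : b ≤ w.length) : (w.take b).length = b := by
  simp [hb]

lemma ins_lt (hb : b ≤ w.length) {i : ℕ} (hi : i < b) :
    (w.insertIdx b c)[i]? = w[i]? := by
  have ht := take_len (w := w) hb
  rw [insertIdx_eq w b c hb, List.getElem?_append_left (by omega), List.getElem?_take,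
    if_pos hi]

lemma ins_self (hb : b ≤ w.length) : (w.insertIdx b c)[b]? = some c := by
  have ht := take_len (w := w) hb
  rw [insertIdx_eq w b c hb, List.getElem?_append_right (by omega), ht]
  simp

lemma ins_gt (hb : b ≤ w.length) {i : ℕ} (hi : b < i) :
    (w.insertIdx b c)[i]? = w[i-1]? := by
  have ht := take_len (w := w) hb
  rw [insertIdx_eq w b c hb, List.getElem?_append_right (by omega), ht]
  have h1 : i - b = (i - b - 1) + 1 := by omega
  rw [h1]
  simp only [List.getElem?_cons_succ, List.getElem?_drop]
  congr 1
  omega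

lemma left_case (hW : SquareFree w) (hb : b ≤ w.length)
    {s X t : List α} (hX : X ≠ [])
    (hdec : w.insertIdx b c = s ++ (X ++ X) ++ t)
    (h1 : s.length ≤ b) (h2 : b < s.length + X.length) :
    ∃ k, w[b + k]? = some c ∧ (k = 0 ∨ ∃ a, Conf w k b a) := by
  classical
  set n := w.length with hn
  set p := X.length with hp
  set σ := s.length with hσ
  have hp0 : 0 < p := by
    rw [hp]
    exact List.length_pos_iff.mpr hX
  have hlen0 : (w.insertIdx b c).length = n + 1 := by
    rw [insertIdx_eq w b c hb]
    simp [hn]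
    omega
  have hXX : (X ++ X).length = p + p := by simp [hp]
  have hlen : σ + (p + p) + t.length = n + 1 := by
    have hL := congrArg List.length hdec
    rw [hlen0] at hL
    simp only [List.length_append] at hL
    omega
  have hperiod : ∀ j, j < p → (w.insertIdx b c)[σ + j]? = (w.insertIdx b c)[σ + j + p]? := by
    intro j hj
    rw [hdec]
    have e1 : (s ++ (X ++ X) ++ t)[σ + j]? = X[j]? := by
      rw [List.append_assoc, List.getElem?_append_right (by omega),
        List.getElem?_append_left (by omega)]
      have : σ + j - σ = j := by omega
      rw [this, List.getElem?_append_left (by omega)]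
    have e2 : (s ++ (X ++ X) ++ t)[σ + j + p]? = X[j]? := by
      rw [List.append_assoc, List.getElem?_append_right (by omega)]
      have : σ + j + p - σ = j + p := by omega
      rw [this, List.getElem?_append_left (by omega), List.getElem?_append_right (by omega)]
      congr 1
      omega
    rw [e1, e2]
  -- the inserted letter equals w[b + (p-1)]
  have hc : w[b + (p - 1)]? = some c := by
    have hper := hperiod (b - σ) (by omega)
    have hq : σ + (b - σ) = b := by omega
    rw [hq] at hper
    rw [ins_self hb] at hper
    rw [ins_gt hb (by omega)] at hper
    have : b + p - 1 = b + (p - 1) := by omega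
    rw [this] at hper
    exact hper.symm
  rcases Nat.lt_or_ge p 2 with hp1 | hp2
  · -- p = 1, k = 0
    have : p = 1 := by omega
    refine ⟨0, ?_, Or.inl rfl⟩
    simpa [this] using hc
  · -- p ≥ 2, k = p - 1 ≥ 1
    set k := p - 1 with hk
    set a := b - σ with ha
    have hA : ∀ i, σ ≤ i → i < b → Ep w k i := by
      intro i hi1 hi2
      have hper := hperiod (i - σ) (by omega)
      have hq : σ + (i - σ) = i := by omega
      rw [hq] at hper
      rw [ins_lt hb (by omega), ins_gt hb (by omega)] at hper
      refine ⟨by omega, ?_⟩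
      have : i + p - 1 = i + k := by omega
      rw [this] at hper
      exact hper
    have hC : ∀ i, b ≤ i → i < σ + p - 1 → Ep w (k + 1) i := by
      intro i hi1 hi2
      have hper := hperiod (i + 1 - σ) (by omega)
      have hq : σ + (i + 1 - σ) = i + 1 := by omega
      rw [hq] at hper
      rw [ins_gt hb (by omega), ins_gt hb (by omega)] at hper
      refine ⟨by omega, ?_⟩
      have e1 : i + 1 - 1 = i := by omega
      have e2 : i + 1 + p - 1 = i + (k + 1) := by omega
      rw [e1, e2] at hper
      exact hper
    have hak : a < k := by
      by_contra hcon
      push_neg at hcon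
      have hak2 : a = k := by omega
      exact cap hW (δ := k) (x := σ) (by omega)
        (fun i hi1 hi2 => hA i hi1 (by omega))
    refine ⟨k, hc, Or.inr ⟨a, ⟨by omega, by omega, ?_, ?_⟩⟩⟩
    · intro i hi1 hi2
      exact hA i (by omega) hi2
    · intro i hi1 hi2
      exact hC i hi1 (by omega)

end Structure

lemma reverse_insertIdx {w : List α} {b : ℕ} {c : α} (hb : b ≤ w.length) :
    (w.insertIdx b c).reverse = w.reverse.insertIdx (w.length - b) c := by
  have hb' : w.length - b ≤ w.reverse.length := by simp
  rw [insertIdx_eq w b c hb, insertIdx_eq w.reverse (w.length - b) c hb']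
  rw [List.reverse_append, List.reverse_cons, List.reverse_drop, List.reverse_take,
    List.append_assoc, List.singleton_append]

lemma exists_witness {w : List α} (hW : SquareFree w) {b : ℕ} (hb : b ≤ w.length) {c : α}
    (h : ¬ SquareFree (w.insertIdx b c)) :
    (∃ k, w[b + k]? = some c ∧ (k = 0 ∨ ∃ a, Conf w k b a)) ∨
    (∃ k, w.reverse[(w.length - b) + k]? = some c ∧
      (k = 0 ∨ ∃ a, Conf w.reverse k (w.length - b) a)) := by
  classical
  rw [SquareFree] at h
  push_neg at h
  obtain ⟨X, hX, hinf⟩ := h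
  obtain ⟨s, t, hdec⟩ := hinf
  set n := w.length with hn
  set p := X.length with hp
  set σ := s.length with hσ
  have hp0 : 0 < p := by rw [hp]; exact List.length_pos_iff.mpr hX
  have hXX : (X ++ X).length = p + p := by simp [hp]
  have hlen0 : (w.insertIdx b c).length = n + 1 := by
    rw [insertIdx_eq w b c hb]
    simp [hn]
    omega
  have hlen : σ + (p + p) + t.length = n + 1 := by
    have hL := congrArg List.length hdec
    rw [hlen0] at hL
    simp only [List.length_append] at hL
    omega
  rcases Nat.lt_or_ge b (σ + p) with hcase1 | hcase1
  · rcases Nat.lt_or_ge b σ with hcase2 | hcase2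
    · -- square strictly after the inserted position : contradiction
      exfalso
      have hd : (w.insertIdx b c).drop (b+1) = w.drop b := by
        rw [insertIdx_eq w b c hb, List.drop_append]
        have ht := take_len (w := w) hb
        rw [List.drop_of_length_le (by omega), ht]
        have h1 : b + 1 - b = 1 := by omega
        rw [h1]
        simp
      have hd2 : (w.insertIdx b c).drop (b+1) = (s.drop (b+1)) ++ ((X ++ X) ++ t) := by
        rw [← hdec, List.append_assoc, List.drop_append]
        have h1 : b + 1 - s.length = 0 := by omega
        rw [h1, List.drop_zero]
      have hinf2 : X ++ X <:+: (w.insertIdx b c).drop (b+1) := by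
        rw [hd2]
        exact ⟨s.drop (b+1), t, by simp [List.append_assoc]⟩
      rw [hd] at hinf2
      exact hW X hX (hinf2.trans (w.drop_suffix b).isInfix)
    · -- left copy contains the inserted position
      exact Or.inl (left_case hW hb hX hdec.symm hcase2 hcase1)
  · rcases Nat.lt_or_ge b (σ + (p + p)) with hcase2 | hcase2
    · -- right copy contains the inserted position : pass to the reverse
      right
      have hdec2 : (w.insertIdx b c).reverse =
          t.reverse ++ (X.reverse ++ X.reverse) ++ s.reverse := by
        rw [← hdec]
        simp [List.reverse_append, List.append_assoc]
      have hres := left_case (w := w.reverse) (b := n - b) (c := c)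
        (squareFree_reverse hW)
        (by rw [List.length_reverse, ← hn]; omega)
        (s := t.reverse) (X := X.reverse) (t := s.reverse)
        (by simpa using hX)
        (by rw [hn, ← reverse_insertIdx hb]; exact hdec2)
        (by rw [List.length_reverse]; omega)
        (by rw [List.length_reverse, List.length_reverse, ← hp]; omega)
      exact hres
    · -- square strictly before the inserted position : contradiction
      exfalso
      have hd : (w.insertIdx b c).take b = w.take b := by
        rw [insertIdx_eq w b c hb, List.take_append]
        have ht := take_len (w := w) hb
        rw [List.take_of_length_le (by omega), ht]
        have h1 : b - b = 0 := by omega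
        rw [h1]
        simp
      have hd2 : (w.insertIdx b c).take b =
          s ++ ((X ++ X) ++ (t.take (b - σ - (p + p)))) := by
        rw [← hdec, List.append_assoc, List.take_append,
          List.take_of_length_le (by omega : s.length ≤ b),
          List.take_append,
          List.take_of_length_le (by rw [hXX]; omega)]
        rw [hXX, ← hσ]
      have hinf2 : X ++ X <:+: (w.insertIdx b c).take b := by
        rw [hd2]
        exact ⟨s, t.take (b - σ - (p + p)), by simp [List.append_assoc]⟩
      rw [hd] at hinf2
      exact hW X hX (hinf2.trans (w.take_prefix b).isInfix)

open scoped Classical in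
noncomputable def SL (w : List α) (b : ℕ) : Finset ℕ :=
  (Finset.range (w.length + 1)).filter
    (fun k => (k = 0 ∧ b < w.length) ∨ (1 ≤ k ∧ b ∈ BB w k))

lemma witness_mem_SL {w : List α} {b k : ℕ} {c : α} (hb : b ≤ w.length)
    (hc : w[b + k]? = some c) (hk : k = 0 ∨ ∃ a, Conf w k b a) : k ∈ SL w b := by
  classical
  have hbk : b + k < w.length := by
    have := List.getElem?_eq_some_iff.mp hc
    exact this.1
  rw [SL, Finset.mem_filter, Finset.mem_range]
  refine ⟨by omega, ?_⟩
  rcases hk with h0 | ⟨a, ha⟩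
  · exact Or.inl ⟨h0, by omega⟩
  · have hk1 : 1 ≤ k := by
      obtain ⟨_, h2, _, _⟩ := ha
      omega
    refine Or.inr ⟨hk1, ?_⟩
    rw [mem_BB_iff]
    exact ⟨hb, a, ha⟩

open scoped Classical in
lemma badC_card {w : List α} [Fintype α] (hW : SquareFree w) {b : ℕ} (hb : b ≤ w.length) :
    (Finset.univ.filter (fun c : α => ¬ SquareFree (w.insertIdx b c))).card ≤
      (SL w b).card + (SL w.reverse (w.length - b)).card := by
  classical
  set badC := Finset.univ.filter (fun c : α => ¬ SquareFree (w.insertIdx b c)) with hbadC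
  have himg : badC.image (fun c => some c) ⊆
      (SL w b).image (fun k => w[b + k]?) ∪
      (SL w.reverse (w.length - b)).image (fun k => w.reverse[(w.length - b) + k]?) := by
    intro oc hoc
    rw [Finset.mem_image] at hoc
    obtain ⟨c, hc, hoc⟩ := hoc
    rw [hbadC, Finset.mem_filter] at hc
    rcases exists_witness hW hb hc.2 with ⟨k, hck, hwit⟩ | ⟨k, hck, hwit⟩
    · apply Finset.mem_union_left
      rw [Finset.mem_image]
      exact ⟨k, witness_mem_SL hb hck hwit, by rw [hck, hoc]⟩
    · apply Finset.mem_union_right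
      rw [Finset.mem_image]
      refine ⟨k, ?_, by rw [hck, hoc]⟩
      have hb2 : w.length - b ≤ w.reverse.length := by simp
      have := witness_mem_SL hb2 (by simpa using hck) hwit
      simpa using this
  calc badC.card = (badC.image (fun c => some c)).card :=
        (Finset.card_image_of_injective _ (Option.some_injective α)).symm
    _ ≤ _ := Finset.card_le_card himg
    _ ≤ ((SL w b).image (fun k => w[b + k]?)).card +
        ((SL w.reverse (w.length - b)).image (fun k => w.reverse[(w.length - b) + k]?)).card :=
        Finset.card_union_le _ _
    _ ≤ (SL w b).card + (SL w.reverse (w.length - b)).card := by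
        gcongr <;> exact Finset.card_image_le

open scoped Classical in
lemma SL_sum {w : List α} :
    ∑ b ∈ Finset.range (w.length + 1), (SL w b).card ≤
      (w.length + 1) + ∑ k ∈ Finset.Icc 1 w.length, (BB w k).card := by
  classical
  set n := w.length with hn
  have hsl : ∀ b, (SL w b).card ≤ 1 +
      ((Finset.range (n + 1)).filter (fun k => 1 ≤ k ∧ b ∈ BB w k)).card := by
    intro b
    have : SL w b ⊆ {0} ∪ (Finset.range (n + 1)).filter (fun k => 1 ≤ k ∧ b ∈ BB w k) := by
      intro k hk
      rw [SL, Finset.mem_filter] at hk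
      rcases hk.2 with h0 | h1
      · exact Finset.mem_union_left _ (by simp [h0.1])
      · exact Finset.mem_union_right _ (by rw [Finset.mem_filter]; exact ⟨hk.1, h1⟩)
    calc (SL w b).card ≤ _ := Finset.card_le_card this
      _ ≤ ({0} : Finset ℕ).card +
          ((Finset.range (n + 1)).filter (fun k => 1 ≤ k ∧ b ∈ BB w k)).card :=
          Finset.card_union_le _ _
      _ = 1 + _ := by rw [Finset.card_singleton]
  calc ∑ b ∈ Finset.range (n + 1), (SL w b).card
      ≤ ∑ b ∈ Finset.range (n + 1), (1 +
        ((Finset.range (n + 1)).filter (fun k => 1 ≤ k ∧ b ∈ BB w k)).card) :=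
        Finset.sum_le_sum (fun b _ => hsl b)
    _ = (n + 1) + ∑ b ∈ Finset.range (n + 1),
        ((Finset.range (n + 1)).filter (fun k => 1 ≤ k ∧ b ∈ BB w k)).card := by
        rw [Finset.sum_add_distrib, Finset.sum_const, Finset.card_range, smul_eq_mul, mul_one]
    _ ≤ (n + 1) + ∑ k ∈ Finset.Icc 1 n, (BB w k).card := by
        gcongr
        have hswap : ∑ b ∈ Finset.range (n + 1),
            ((Finset.range (n + 1)).filter (fun k => 1 ≤ k ∧ b ∈ BB w k)).card
            = ∑ k ∈ Finset.range (n + 1), ∑ b ∈ Finset.range (n + 1),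
              (if 1 ≤ k ∧ b ∈ BB w k then 1 else 0) := by
          rw [Finset.sum_comm]
          exact Finset.sum_congr rfl (fun b _ => by rw [Finset.card_filter])
        rw [hswap]
        have hinner : ∀ k ∈ Finset.range (n + 1), ∑ b ∈ Finset.range (n + 1),
            (if 1 ≤ k ∧ b ∈ BB w k then 1 else 0) ≤
            (if 1 ≤ k then (BB w k).card else 0) := by
          intro k _
          rcases Nat.lt_or_ge k 1 with hk | hk
          · rw [if_neg (by omega)]
            apply le_of_eq
            apply Finset.sum_eq_zero
            intro b _
            rw [if_neg (by intro hcon; omega)]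
          · rw [if_pos hk]
            have : ∑ b ∈ Finset.range (n + 1), (if 1 ≤ k ∧ b ∈ BB w k then 1 else 0)
                = ((Finset.range (n + 1)).filter (fun b => 1 ≤ k ∧ b ∈ BB w k)).card := by
              rw [Finset.card_filter]
            rw [this]
            apply Finset.card_le_card
            intro b hbm
            rw [Finset.mem_filter] at hbm
            exact hbm.2.2
        calc ∑ k ∈ Finset.range (n + 1), ∑ b ∈ Finset.range (n + 1),
              (if 1 ≤ k ∧ b ∈ BB w k then 1 else 0)
            ≤ ∑ k ∈ Finset.range (n + 1), (if 1 ≤ k then (BB w k).card else 0) :=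
              Finset.sum_le_sum hinner
          _ = ∑ k ∈ (Finset.range (n + 1)).filter (fun k => 1 ≤ k), (BB w k).card := by
              rw [Finset.sum_filter]
          _ = ∑ k ∈ Finset.Icc 1 n, (BB w k).card := by
              congr 1
              ext k
              simp [Finset.mem_filter, Finset.mem_range, Finset.mem_Icc]
              omega

end CBI

open CBI in
/-- For a square-free word `W` of length `n` over a finite alphabet, the number of pairs
`(b, c)` with `0 ≤ b ≤ n` and `c` a letter such that inserting `c` at gap `b` creates a
square is less than `16.7 (n + 1)`. -/
theorem count_bad_insertions {α : Type*} [Fintype α] (W : List α) (n : ℕ)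
    (hn : W.length = n) (hW : SquareFree W) :
    (({p : ℕ × α | p.1 ≤ n ∧ ¬ SquareFree (W.insertIdx p.1 p.2)}.ncard : ℝ))
      < 16.7 * ((n : ℝ) + 1) := by
  classical
  subst hn
  set n := W.length with hn
  set F := ((Finset.range (n + 1)) ×ˢ (Finset.univ : Finset α)).filter
    (fun p => ¬ SquareFree (W.insertIdx p.1 p.2)) with hF
  have hset : {p : ℕ × α | p.1 ≤ n ∧ ¬ SquareFree (W.insertIdx p.1 p.2)} = ↑F := by
    ext p
    simp only [Set.mem_setOf_eq, hF, Finset.coe_filter, Finset.mem_product, Finset.mem_range,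
      Finset.mem_univ, and_true, Nat.lt_succ_iff]
  rw [hset, Set.ncard_coe_finset]
  have hcard : F.card = ∑ b ∈ Finset.range (n + 1),
      (Finset.univ.filter (fun c : α => ¬ SquareFree (W.insertIdx b c))).card := by
    rw [Finset.card_eq_sum_card_fiberwise
      (f := Prod.fst) (t := Finset.range (n + 1))
      (fun p hp => by simp only [hF, Finset.mem_coe, Finset.mem_filter, Finset.mem_product] at hp ⊢; exact hp.1.1)]
    apply Finset.sum_congr rfl
    intro b hb
    apply Finset.card_bij' (i := fun p _ => p.2) (j := fun c _ => (b, c))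
    · intro p hp
      simp only [Finset.mem_filter] at hp
      obtain ⟨hp1, hfst⟩ := hp
      rw [hF, Finset.mem_filter] at hp1
      simp only [Finset.mem_filter, Finset.mem_univ, true_and]
      rw [← hfst]
      exact hp1.2
    · intro p hp
      simp only [Finset.mem_filter] at hp
      exact Prod.ext_iff.mpr ⟨hp.2.symm, rfl⟩
    · intro c hc
      rfl
    · intro c hc
      simp only [Finset.mem_filter] at hc ⊢
      refine ⟨?_, by trivial⟩
      rw [hF, Finset.mem_filter, Finset.mem_product]
      exact ⟨⟨hb, Finset.mem_univ _⟩, hc.2⟩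
  have hfiber : ∀ b ∈ Finset.range (n + 1),
      (Finset.univ.filter (fun c : α => ¬ SquareFree (W.insertIdx b c))).card ≤
        (SL W b).card + (SL W.reverse (n - b)).card := by
    intro b hb
    have := badC_card (w := W) hW (b := b) (Nat.lt_succ_iff.mp (Finset.mem_range.mp hb))
    rwa [← hn] at this
  have h1 : F.card ≤ (∑ b ∈ Finset.range (n+1), (SL W b).card) +
      (∑ b ∈ Finset.range (n+1), (SL W.reverse (n - b)).card) := by
    rw [hcard, ← Finset.sum_add_distrib]
    exact Finset.sum_le_sum hfiber
  have hrev : (∑ b ∈ Finset.range (n+1), (SL W.reverse (n - b)).card) =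
      ∑ b ∈ Finset.range (n+1), (SL W.reverse b).card := by
    apply Finset.sum_nbij' (i := fun b => n - b) (j := fun b => n - b)
    · intro a ha
      rw [Finset.mem_range] at ha ⊢
      omega
    · intro a ha
      rw [Finset.mem_range] at ha ⊢
      omega
    · intro a ha
      rw [Finset.mem_range] at ha
      omega
    · intro a ha
      rw [Finset.mem_range] at ha
      omega
    · intro a ha
      rfl
  have hS1 := SL_sum (w := W)
  rw [← hn] at hS1
  have hS2 := SL_sum (w := W.reverse)
  rw [List.length_reverse, ← hn] at hS2
  have hT1 := side_bound hW
  rw [← hn] at hT1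
  have hT2 := side_bound (squareFree_reverse hW)
  rw [List.length_reverse, ← hn] at hT2
  have hN : F.card ≤ (n+1) + (∑ k ∈ Finset.Icc 1 n, (BB W k).card) +
      ((n+1) + ∑ k ∈ Finset.Icc 1 n, (BB W.reverse k).card) := by
    omega
  have hcast : (F.card : ℝ) ≤ 2*((n:ℝ)+1) + (∑ k ∈ Finset.Icc 1 n, ((BB W k).card : ℝ)) +
      (∑ k ∈ Finset.Icc 1 n, ((BB W.reverse k).card : ℝ)) := by
    calc (F.card : ℝ) ≤ (((n+1) + (∑ k ∈ Finset.Icc 1 n, (BB W k).card) +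
        ((n+1) + ∑ k ∈ Finset.Icc 1 n, (BB W.reverse k).card) : ℕ) : ℝ) :=
          Nat.cast_le.mpr hN
      _ = 2*((n:ℝ)+1) + (∑ k ∈ Finset.Icc 1 n, ((BB W k).card : ℝ)) +
          (∑ k ∈ Finset.Icc 1 n, ((BB W.reverse k).card : ℝ)) := by
          push_cast
          ring
  have hfin : (F.card : ℝ) ≤ 2*((n:ℝ)+1) + 6.03*(n:ℝ) + 6.03*(n:ℝ) := by
    linarith
  have hnn : (0:ℝ) ≤ (n:ℝ) := Nat.cast_nonneg n
  nlinarith [hfin, hnn]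
end
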